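/- arXiv:2005.06905 — 2 statements merged into one kernel-verified Lean document; each statement's English description precedes it below -/
import Mathlib

section
/- There exists a constant C > 0, depending only on α and T, such that for every t with max(0, T − 1/e) < t < T one has ‖g_t ⊗₁ g_t‖ ≤ C/λ_t^{3/2}. -/
open MeasureTheory Real Filter Topology

/-- `λ_t := |log(T−t)|/(2α−1)`. -/
noncomputable def lam (T α t : ℝ) : ℝ := |Real.log (T - t)| / (2 * α - 1)

/-- The kernel `f_t`. -/
noncomputable def fker (T α t : ℝ) (u v : ℝ) : ℝ :=
  if u ∈ Set.Icc (0:ℝ) t ∧ v ∈ Set.Icc (0:ℝ) t then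
    (1 / (2 * Real.sqrt (lam T α t))) * (T - max u v) ^ (α - 1) * (T - min u v) ^ (-α)
  else 0

/-- The kernel `g_t`. -/
noncomputable def gker (T α t : ℝ) (u v : ℝ) : ℝ :=
  if u ∈ Set.Icc (0:ℝ) t ∧ v ∈ Set.Icc (0:ℝ) t then
    (T - u) ^ (-α) * (T - v) ^ (-α) *
      ((T - max u v) ^ (2 * α - 1) - (T - t) ^ (2 * α - 1)) / |Real.log (T - t)|
  else 0

/-- `⟨p,q⟩ := ∫_{[0,T]²} p(u,v) q(u,v) du dv`. -/
noncomputable def ip (T : ℝ) (p q : ℝ → ℝ → ℝ) : ℝ :=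
  ∫ u in Set.Icc (0:ℝ) T, ∫ v in Set.Icc (0:ℝ) T, p u v * q u v

/-- `‖p‖² := ⟨p,p⟩`. -/
noncomputable def normSq (T : ℝ) (p : ℝ → ℝ → ℝ) : ℝ := ip T p p

/-- The contraction `(p ⊗₁ q)(x,y) := ∫₀^T p(x,u) q(y,u) du`. -/
noncomputable def contr (T : ℝ) (p q : ℝ → ℝ → ℝ) : ℝ → ℝ → ℝ :=
  fun x y => ∫ u in Set.Icc (0:ℝ) T, p x u * q y u

/-- `b_t := (1/λ_t)·∫₀ᵗ ∫₀ˢ (T−s)^{2α−2}(T−u)^{−2α} du ds`. -/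
noncomputable def bfun (T α t : ℝ) : ℝ :=
  (1 / lam T α t) *
    ∫ s in (0:ℝ)..t, ∫ u in (0:ℝ)..s, (T - s) ^ (2 * α - 2) * (T - u) ^ (-(2 * α))

/-- `A_{t,1}`. -/
noncomputable def A1 (T α t : ℝ) : ℝ :=
  (1 / (lam T α t) ^ 2) *
    ∫ x4 in (0:ℝ)..t, ∫ x3 in (0:ℝ)..x4, ∫ x2 in (0:ℝ)..x3, ∫ x1 in (0:ℝ)..x2,
      (T - x4) ^ (2 * α - 2) * (T - x3) ^ (-1 : ℝ) * (T - x2) ^ (-1 : ℝ) *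
        (T - x1) ^ (-(2 * α))

/-- `A_{t,2}`. -/
noncomputable def A2 (T α t : ℝ) : ℝ :=
  (1 / (2 * (lam T α t) ^ 2)) *
    ∫ x4 in (0:ℝ)..t, ∫ x2 in (0:ℝ)..x4, ∫ x3 in (0:ℝ)..x2, ∫ x1 in (0:ℝ)..x3,
      (T - x4) ^ (2 * α - 2) * (T - x2) ^ (2 * α - 2) * (T - x3) ^ (-(2 * α)) *
        (T - x1) ^ (-(2 * α))


lemma intIcc_rpow {T a b : ℝ} (hab : a ≤ b) (hbT : b < T) (r : ℝ) (hr : r ≠ -1) :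
    ∫ u in Set.Icc a b, (T - u) ^ r = ((T - a) ^ (r+1) - (T - b) ^ (r+1)) / (r+1) := by
  rw [MeasureTheory.integral_Icc_eq_integral_Ioc, ← intervalIntegral.integral_of_le hab,
    intervalIntegral.integral_comp_sub_left (fun s => s ^ r) T,
    integral_rpow (Or.inr ⟨hr, by
      rw [Set.uIcc_of_le (by linarith)]
      intro h
      have := h.1
      linarith⟩)]

lemma intIcc_neg_one {T a b : ℝ} (hab : a ≤ b) (hbT : b < T) :
    ∫ u in Set.Icc a b, (T - u) ^ (-1 : ℝ) = Real.log (T - a) - Real.log (T - b) := by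
  rw [MeasureTheory.integral_Icc_eq_integral_Ioc, ← intervalIntegral.integral_of_le hab,
    intervalIntegral.integral_comp_sub_left (fun s => s ^ (-1:ℝ)) T]
  have h1 : ∀ x : ℝ, x ^ (-1:ℝ) = 1 / x := fun x => by rw [Real.rpow_neg_one, one_div]
  simp_rw [h1]
  rw [integral_one_div (by
      rw [Set.uIcc_of_le (by linarith)]
      intro h
      have := h.1
      linarith)]
  rw [Real.log_div (by linarith) (by linarith)]

lemma intOn_rpow {T a b : ℝ} (hbT : b < T) (r : ℝ) :
    MeasureTheory.IntegrableOn (fun u => (T - u) ^ r) (Set.Icc a b) := by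
  apply ContinuousOn.integrableOn_Icc
  apply ContinuousOn.rpow_const (continuous_const.sub continuous_id).continuousOn
  intro u hu
  left
  have : u ≤ b := hu.2
  have : (0:ℝ) < T - u := by linarith
  exact ne_of_gt this


lemma pow_shift {a b εe p q : ℝ} (hb : 0 < b) (hba : b ≤ a) (hε : 0 ≤ εe) :
    a ^ p * b ^ q ≤ a ^ (p + εe) * b ^ (q - εe) := by
  have ha : 0 < a := lt_of_lt_of_le hb hba
  have h1 : a ^ p = a ^ (p + εe) * a ^ (-εe) := by
    rw [← Real.rpow_add ha]; ring_nf
  have h2 : b ^ (q - εe) = b ^ (-εe) * b ^ q := by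
    rw [← Real.rpow_add hb]; ring_nf
  have key : a ^ (-εe) ≤ b ^ (-εe) := Real.rpow_le_rpow_of_nonpos hb hba (by linarith)
  calc a ^ p * b ^ q = a ^ (p + εe) * (a ^ (-εe) * b ^ q) := by rw [h1]; ring
    _ ≤ a ^ (p + εe) * (b ^ (-εe) * b ^ q) := by
        apply mul_le_mul_of_nonneg_left _ (Real.rpow_nonneg ha.le _)
        exact mul_le_mul_of_nonneg_right key (Real.rpow_nonneg hb.le _)
    _ = a ^ (p + εe) * b ^ (q - εe) := by rw [h2]

lemma gker_nonneg {T α t : ℝ} (hα : 1/2 < α) (htT : t < T) (u v : ℝ) :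
    0 ≤ gker T α t u v := by
  rw [gker]
  split_ifs with h
  · apply div_nonneg _ (abs_nonneg _)
    apply mul_nonneg (mul_nonneg (Real.rpow_nonneg (by have := h.1.2; linarith) _)
      (Real.rpow_nonneg (by have := h.2.2; linarith) _))
    have hm : max u v ≤ t := max_le h.1.2 h.2.2
    have : (T - t) ^ (2*α-1) ≤ (T - max u v) ^ (2*α-1) :=
      Real.rpow_le_rpow (by linarith) (by linarith) (by linarith)
    linarith
  · exact le_refl _

lemma gker_le {T α t : ℝ} (hα : 1/2 < α) (htT : t < T) (hL : 0 < |Real.log (T-t)|)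
    {x u : ℝ} (hx : x ∈ Set.Icc (0:ℝ) t) (hu : u ∈ Set.Icc (0:ℝ) t) :
    gker T α t x u ≤ (1 / |Real.log (T-t)|) * ((T - max x u) ^ (α-1) * (T - min x u) ^ (-α)) := by
  rw [gker, if_pos ⟨hx, hu⟩, one_div_mul_eq_div]
  apply (div_le_div_iff_of_pos_right hL).mpr
  have hx' : (0:ℝ) < T - x := by have := hx.2; linarith
  have hu' : (0:ℝ) < T - u := by have := hu.2; linarith
  have hD : (T - max x u) ^ (2*α-1) - (T - t) ^ (2*α-1) ≤ (T - max x u) ^ (2*α-1) :=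
    sub_le_self _ (Real.rpow_nonneg (by linarith) _)
  rcases le_total u x with h | h
  · rw [max_eq_left h, min_eq_right h]
    calc (T-x)^(-α) * (T-u)^(-α) * ((T - x) ^ (2*α-1) - (T - t) ^ (2*α-1))
        ≤ (T-x)^(-α) * (T-u)^(-α) * (T-x)^(2*α-1) := by
          rw [max_eq_left h] at hD
          exact mul_le_mul_of_nonneg_left hD
            (mul_nonneg (Real.rpow_nonneg hx'.le _) (Real.rpow_nonneg hu'.le _))
      _ = (T-x)^(α-1) * (T-u)^(-α) := by
          rw [show (α-1 : ℝ) = -α + (2*α-1) by ring, Real.rpow_add hx']; ring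
  · rw [max_eq_right h, min_eq_left h]
    calc (T-x)^(-α) * (T-u)^(-α) * ((T - u) ^ (2*α-1) - (T - t) ^ (2*α-1))
        ≤ (T-x)^(-α) * (T-u)^(-α) * (T-u)^(2*α-1) := by
          rw [max_eq_right h] at hD
          exact mul_le_mul_of_nonneg_left hD
            (mul_nonneg (Real.rpow_nonneg hx'.le _) (Real.rpow_nonneg hu'.le _))
      _ = (T-u)^(α-1) * (T-x)^(-α) := by
          rw [show (α-1 : ℝ) = -α + (2*α-1) by ring, Real.rpow_add hu']; ring

lemma gker_zero {T α t x : ℝ} (hx : x ∉ Set.Icc (0:ℝ) t) (u : ℝ) :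
    gker T α t x u = 0 := by
  rw [gker, if_neg (fun hc => hx hc.1)]

lemma gker_zero2 {T α t u : ℝ} (hu : u ∉ Set.Icc (0:ℝ) t) (x : ℝ) :
    gker T α t x u = 0 := by
  rw [gker, if_neg (fun hc => hu hc.2)]

lemma intIcc_rpow_le_neg {T a b : ℝ} (hab : a ≤ b) (hbT : b < T) {r : ℝ} (hr : r + 1 < 0) :
    ∫ u in Set.Icc a b, (T - u) ^ r ≤ (T - b) ^ (r+1) / (-(r+1)) := by
  rw [intIcc_rpow hab hbT r (by intro h; rw [h] at hr; norm_num at hr)]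
  have h0 : ((T-a)^(r+1) - (T-b)^(r+1)) / (r+1) = ((T-b)^(r+1) - (T-a)^(r+1)) / (-(r+1)) := by
    rw [div_eq_div_iff (by linarith) (by linarith)]; ring
  rw [h0]
  apply (div_le_div_iff_of_pos_right (by linarith)).mpr
  exact sub_le_self _ (Real.rpow_nonneg (by linarith) _)

lemma intIcc_rpow_le_pos {T a b : ℝ} (hab : a ≤ b) (hbT : b < T) {r : ℝ} (hr : 0 < r + 1) :
    ∫ u in Set.Icc a b, (T - u) ^ r ≤ (T - a) ^ (r+1) / (r+1) := by
  rw [intIcc_rpow hab hbT r (by intro h; rw [h] at hr; norm_num at hr)]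
  apply (div_le_div_iff_of_pos_right hr).mpr
  exact sub_le_self _ (Real.rpow_nonneg (by linarith) _)

lemma contr_le_aux {T α t : ℝ} (hT : 0 < T) (hα : 1/2 < α) (htT : t < T)
    (hL : 1 ≤ |Real.log (T-t)|) {x y : ℝ} (hxy : x ≤ y)
    (hx : x ∈ Set.Icc (0:ℝ) t) (hy : y ∈ Set.Icc (0:ℝ) t) :
    ∫ u in Set.Icc (0:ℝ) T, gker T α t x u * gker T α t y u ≤
      6/(2*α-1) / |Real.log (T-t)|^2 *
        ((T - x) ^ ((2*α-1)/4 - α) * (T - y) ^ (α - 1 - (2*α-1)/4)) := by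
  have hL0 : (0:ℝ) < |Real.log (T-t)| := lt_of_lt_of_le one_pos hL
  set L := |Real.log (T-t)| with hLdef
  set ε := (2*α-1)/4 with hεdef
  have hε : 0 < ε := by rw [hεdef]; linarith
  have hx' : (0:ℝ) < T - x := by have := hx.2; linarith
  have hy' : (0:ℝ) < T - y := by have := hy.2; linarith
  have hyx : T - y ≤ T - x := by linarith
  have ht' : (0:ℝ) < T - t := by linarith
  have hxT : x ≤ T := by linarith
  have hyT : y ≤ T := by linarith
  have htT' : t ≤ T := by linarith
  set ψ1 : ℝ → ℝ :=
    (Set.Icc (0:ℝ) x).indicator (fun u => ((T-x)^(α-1) * (T-y)^(α-1)) * (T-u)^(-(2*α))) with hψ1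
  set ψ2 : ℝ → ℝ :=
    (Set.Icc x y).indicator (fun u => ((T-x)^(-α) * (T-y)^(α-1-ε)) * (T-u)^(ε-1)) with hψ2
  set ψ3 : ℝ → ℝ :=
    (Set.Icc y t).indicator (fun u => ((T-x)^(-α) * (T-y)^(-α)) * (T-u)^(2*α-2)) with hψ3
  have hψ1n : ∀ u, 0 ≤ ψ1 u := by
    intro u
    apply Set.indicator_nonneg
    intro v hv
    have : (0:ℝ) < T - v := by have := hv.2; linarith
    exact mul_nonneg (mul_nonneg (Real.rpow_nonneg hx'.le _) (Real.rpow_nonneg hy'.le _))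
      (Real.rpow_nonneg this.le _)
  have hψ2n : ∀ u, 0 ≤ ψ2 u := by
    intro u
    apply Set.indicator_nonneg
    intro v hv
    have : (0:ℝ) < T - v := by have := hv.2; linarith
    exact mul_nonneg (mul_nonneg (Real.rpow_nonneg hx'.le _) (Real.rpow_nonneg hy'.le _))
      (Real.rpow_nonneg this.le _)
  have hψ3n : ∀ u, 0 ≤ ψ3 u := by
    intro u
    apply Set.indicator_nonneg
    intro v hv
    have : (0:ℝ) < T - v := by have := hv.2; linarith
    exact mul_nonneg (mul_nonneg (Real.rpow_nonneg hx'.le _) (Real.rpow_nonneg hy'.le _))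
      (Real.rpow_nonneg this.le _)
  -- integrability of each indicator piece
  have hint1 : Integrable ψ1 (volume.restrict (Set.Icc (0:ℝ) T)) :=
    (MeasureTheory.IntegrableOn.integrable_indicator
      ((intOn_rpow (show x < T by linarith) (-(2*α))).const_mul _) measurableSet_Icc).restrict
  have hint2 : Integrable ψ2 (volume.restrict (Set.Icc (0:ℝ) T)) :=
    (MeasureTheory.IntegrableOn.integrable_indicator
      ((intOn_rpow (show y < T by linarith) (ε-1)).const_mul _) measurableSet_Icc).restrict
  have hint3 : Integrable ψ3 (volume.restrict (Set.Icc (0:ℝ) T)) :=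
    (MeasureTheory.IntegrableOn.integrable_indicator
      ((intOn_rpow htT (2*α-2)).const_mul _) measurableSet_Icc).restrict
  -- pointwise bound
  have hpt : ∀ u, gker T α t x u * gker T α t y u ≤ (1/L^2) * (ψ1 u + (ψ2 u + ψ3 u)) := by
    intro u
    by_cases hu : u ∈ Set.Icc (0:ℝ) t
    · have hu' : (0:ℝ) < T - u := by have := hu.2; linarith
      have step1 : gker T α t x u * gker T α t y u ≤
          (1/L^2) * (((T - max x u) ^ (α-1) * (T - min x u) ^ (-α)) *
            ((T - max y u) ^ (α-1) * (T - min y u) ^ (-α))) := by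
        have b1 := gker_le hα htT hL0 hx hu
        have b2 := gker_le hα htT hL0 hy hu
        have n1 := gker_nonneg (t := t) (T := T) hα htT x u
        have n2 := gker_nonneg (t := t) (T := T) hα htT y u
        have hFy : (0:ℝ) ≤ (T - max y u) ^ (α-1) * (T - min y u) ^ (-α) := by
          have h1 : (0:ℝ) < T - max y u := by
            rcases max_cases y u with ⟨h,_⟩|⟨h,_⟩ <;> rw [h] <;> linarith
          have h2 : (0:ℝ) < T - min y u := by
            rcases min_cases y u with ⟨h,_⟩|⟨h,_⟩ <;> rw [h] <;> linarith
          exact mul_nonneg (Real.rpow_nonneg h1.le _) (Real.rpow_nonneg h2.le _)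
        calc gker T α t x u * gker T α t y u
            ≤ ((1/L) * ((T - max x u) ^ (α-1) * (T - min x u) ^ (-α))) *
              ((1/L) * ((T - max y u) ^ (α-1) * (T - min y u) ^ (-α))) := by
              apply mul_le_mul b1 b2 n2
              exact mul_nonneg (by positivity) (by
                have h1 : (0:ℝ) < T - max x u := by
                  rcases max_cases x u with ⟨h,_⟩|⟨h,_⟩ <;> rw [h] <;> linarith
                have h2 : (0:ℝ) < T - min x u := by
                  rcases min_cases x u with ⟨h,_⟩|⟨h,_⟩ <;> rw [h] <;> linarith
                exact mul_nonneg (Real.rpow_nonneg h1.le _) (Real.rpow_nonneg h2.le _))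
          _ = (1/L^2) * (((T - max x u) ^ (α-1) * (T - min x u) ^ (-α)) *
              ((T - max y u) ^ (α-1) * (T - min y u) ^ (-α))) := by ring
      refine le_trans step1 (mul_le_mul_of_nonneg_left ?_ (by positivity))
      rcases le_or_gt u x with h1 | h1
      · -- u ≤ x : piece ψ1
        rw [max_eq_left h1, min_eq_right h1, max_eq_left (le_trans h1 hxy),
          min_eq_right (le_trans h1 hxy)]
        have hval : ψ1 u = ((T-x)^(α-1) * (T-y)^(α-1)) * (T-u)^(-(2*α)) :=
          Set.indicator_of_mem (Set.mem_Icc.mpr ⟨hu.1, h1⟩) _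
        have heq : ((T-x)^(α-1) * (T-u)^(-α)) * ((T-y)^(α-1) * (T-u)^(-α)) =
            ((T-x)^(α-1) * (T-y)^(α-1)) * (T-u)^(-(2*α)) := by
          rw [show (-(2*α) : ℝ) = -α + -α by ring, Real.rpow_add hu']; ring
        rw [heq, ← hval]
        have := hψ2n u; have := hψ3n u
        linarith
      · rcases le_or_gt u y with h2 | h2
        · -- x < u ≤ y : piece ψ2
          rw [max_eq_right h1.le, min_eq_left h1.le, max_eq_left h2, min_eq_right h2]
          have hval : ψ2 u = ((T-x)^(-α) * (T-y)^(α-1-ε)) * (T-u)^(ε-1) :=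
            Set.indicator_of_mem (Set.mem_Icc.mpr ⟨h1.le, h2⟩) _
          have heq : ((T-u)^(α-1) * (T-x)^(-α)) * ((T-y)^(α-1) * (T-u)^(-α)) =
              (T-x)^(-α) * ((T-u)^(-1:ℝ) * (T-y)^(α-1)) := by
            rw [show (-1 : ℝ) = (α-1) + -α by ring, Real.rpow_add hu']; ring
          rw [heq]
          have hb : (T-u)^(-1:ℝ) * (T-y)^(α-1) ≤ (T-u)^(ε-1) * (T-y)^(α-1-ε) := by
            have := pow_shift (a := T-u) (b := T-y) (εe := ε) (p := (-1:ℝ)) (q := α-1)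
              hy' (by linarith) hε.le
            calc (T-u)^(-1:ℝ) * (T-y)^(α-1) ≤ (T-u)^(-1+ε) * (T-y)^(α-1-ε) := this
              _ = (T-u)^(ε-1) * (T-y)^(α-1-ε) := by rw [show (-1+ε : ℝ) = ε-1 by ring]
          have hstep : (T-x)^(-α) * ((T-u)^(-1:ℝ) * (T-y)^(α-1)) ≤ ψ2 u := by
            rw [hval]
            calc (T-x)^(-α) * ((T-u)^(-1:ℝ) * (T-y)^(α-1))
                ≤ (T-x)^(-α) * ((T-u)^(ε-1) * (T-y)^(α-1-ε)) :=
                  mul_le_mul_of_nonneg_left hb (Real.rpow_nonneg hx'.le _)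
              _ = ((T-x)^(-α) * (T-y)^(α-1-ε)) * (T-u)^(ε-1) := by ring
          have := hψ1n u; have := hψ3n u
          linarith
        · -- y < u ≤ t : piece ψ3
          rw [max_eq_right h1.le, min_eq_left h1.le, max_eq_right h2.le, min_eq_left h2.le]
          have hval : ψ3 u = ((T-x)^(-α) * (T-y)^(-α)) * (T-u)^(2*α-2) :=
            Set.indicator_of_mem (Set.mem_Icc.mpr ⟨h2.le, hu.2⟩) _
          have heq : ((T-u)^(α-1) * (T-x)^(-α)) * ((T-u)^(α-1) * (T-y)^(-α)) =
              ((T-x)^(-α) * (T-y)^(-α)) * (T-u)^(2*α-2) := by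
            rw [show (2*α-2 : ℝ) = (α-1) + (α-1) by ring, Real.rpow_add hu']; ring
          rw [heq, ← hval]
          have := hψ1n u; have := hψ2n u
          linarith
    · rw [gker_zero2 hu x, zero_mul]
      have := hψ1n u; have := hψ2n u; have := hψ3n u
      positivity
  have h2α : (0:ℝ) < 2*α-1 := by linarith
  have hP : 0 ≤ (T-x)^(ε-α) * (T-y)^(α-1-ε) :=
    mul_nonneg (Real.rpow_nonneg hx'.le _) (Real.rpow_nonneg hy'.le _)
  have hmain : (∫ u in Set.Icc (0:ℝ) T, gker T α t x u * gker T α t y u) ≤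
      (1/L^2) * ((∫ u in Set.Icc (0:ℝ) T, ψ1 u) +
        ((∫ u in Set.Icc (0:ℝ) T, ψ2 u) + (∫ u in Set.Icc (0:ℝ) T, ψ3 u))) := by
    have h := integral_mono_of_nonneg (μ := volume.restrict (Set.Icc (0:ℝ) T))
      (ae_of_all _ (fun u => mul_nonneg (gker_nonneg hα htT x u) (gker_nonneg hα htT y u)))
      ((hint1.add (hint2.add hint3)).const_mul (1/L^2))
      (ae_of_all _ hpt)
    calc (∫ u in Set.Icc (0:ℝ) T, gker T α t x u * gker T α t y u)
        ≤ ∫ u in Set.Icc (0:ℝ) T, (1/L^2) * (ψ1 u + (ψ2 u + ψ3 u)) := h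
      _ = (1/L^2) * ((∫ u in Set.Icc (0:ℝ) T, ψ1 u) +
          ((∫ u in Set.Icc (0:ℝ) T, ψ2 u) + (∫ u in Set.Icc (0:ℝ) T, ψ3 u))) := by
          have h23 : Integrable (fun u => ψ2 u + ψ3 u) (volume.restrict (Set.Icc (0:ℝ) T)) := by
            exact hint2.add hint3
          rw [integral_const_mul, integral_add hint1 h23, integral_add hint2 hint3]
  have hS1 : (∫ u in Set.Icc (0:ℝ) T, ψ1 u) ≤ (1/(2*α-1)) * ((T-x)^(ε-α) * (T-y)^(α-1-ε)) := by
    have e1 : (∫ u in Set.Icc (0:ℝ) T, ψ1 u) =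
        ((T-x)^(α-1) * (T-y)^(α-1)) * ∫ u in Set.Icc (0:ℝ) x, (T-u)^(-(2*α)) := by
      rw [hψ1, MeasureTheory.integral_indicator measurableSet_Icc,
        Measure.restrict_restrict measurableSet_Icc,
        Set.inter_eq_self_of_subset_left (Set.Icc_subset_Icc le_rfl hxT),
        integral_const_mul]
    rw [e1]
    have hI : (∫ u in Set.Icc (0:ℝ) x, (T-u)^(-(2*α))) ≤ (T-x)^(1-2*α) / (2*α-1) := by
      have h1 := intIcc_rpow_le_neg (a := (0:ℝ)) hx.1 (show x < T by linarith)
        (r := -(2*α)) (by linarith)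
      calc (∫ u in Set.Icc (0:ℝ) x, (T-u)^(-(2*α)))
          ≤ (T-x)^(-(2*α)+1) / (-(-(2*α)+1)) := h1
        _ = (T-x)^(1-2*α) / (2*α-1) := by
            rw [show (-(2*α)+1 : ℝ) = 1-2*α by ring]; ring_nf
    calc ((T-x)^(α-1) * (T-y)^(α-1)) * ∫ u in Set.Icc (0:ℝ) x, (T-u)^(-(2*α))
        ≤ ((T-x)^(α-1) * (T-y)^(α-1)) * ((T-x)^(1-2*α)/(2*α-1)) :=
          mul_le_mul_of_nonneg_left hI
            (mul_nonneg (Real.rpow_nonneg hx'.le _) (Real.rpow_nonneg hy'.le _))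
      _ = (1/(2*α-1)) * ((T-x)^(-α) * (T-y)^(α-1)) := by
          rw [show (-α : ℝ) = (α-1) + (1-2*α) by ring, Real.rpow_add hx']; ring
      _ ≤ (1/(2*α-1)) * ((T-x)^(ε-α) * (T-y)^(α-1-ε)) := by
          apply mul_le_mul_of_nonneg_left _ (one_div_nonneg.mpr h2α.le)
          have h2 := pow_shift (a := T-x) (b := T-y) (εe := ε) (p := -α) (q := α-1) hy' hyx hε.le
          calc (T-x)^(-α) * (T-y)^(α-1) ≤ (T-x)^(-α+ε) * (T-y)^(α-1-ε) := h2
            _ = (T-x)^(ε-α) * (T-y)^(α-1-ε) := by rw [show (-α+ε:ℝ) = ε-α by ring]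
  have hS2 : (∫ u in Set.Icc (0:ℝ) T, ψ2 u) ≤ (1/ε) * ((T-x)^(ε-α) * (T-y)^(α-1-ε)) := by
    have e2 : (∫ u in Set.Icc (0:ℝ) T, ψ2 u) =
        ((T-x)^(-α) * (T-y)^(α-1-ε)) * ∫ u in Set.Icc x y, (T-u)^(ε-1) := by
      rw [hψ2, MeasureTheory.integral_indicator measurableSet_Icc,
        Measure.restrict_restrict measurableSet_Icc,
        Set.inter_eq_self_of_subset_left (Set.Icc_subset_Icc hx.1 hyT),
        integral_const_mul]
    rw [e2]
    have hI : (∫ u in Set.Icc x y, (T-u)^(ε-1)) ≤ (T-x)^ε / ε := by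
      have h1 := intIcc_rpow_le_pos hxy (show y < T by linarith) (r := ε-1) (by linarith)
      calc (∫ u in Set.Icc x y, (T-u)^(ε-1)) ≤ (T-x)^(ε-1+1) / (ε-1+1) := h1
        _ = (T-x)^ε / ε := by rw [show (ε-1+1 : ℝ) = ε by ring]
    calc ((T-x)^(-α) * (T-y)^(α-1-ε)) * ∫ u in Set.Icc x y, (T-u)^(ε-1)
        ≤ ((T-x)^(-α) * (T-y)^(α-1-ε)) * ((T-x)^ε/ε) :=
          mul_le_mul_of_nonneg_left hI
            (mul_nonneg (Real.rpow_nonneg hx'.le _) (Real.rpow_nonneg hy'.le _))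
      _ = (1/ε) * ((T-x)^(ε-α) * (T-y)^(α-1-ε)) := by
          rw [show (ε-α : ℝ) = -α + ε by ring, Real.rpow_add hx']; ring
  have hS3 : (∫ u in Set.Icc (0:ℝ) T, ψ3 u) ≤ (1/(2*α-1)) * ((T-x)^(ε-α) * (T-y)^(α-1-ε)) := by
    have e3 : (∫ u in Set.Icc (0:ℝ) T, ψ3 u) =
        ((T-x)^(-α) * (T-y)^(-α)) * ∫ u in Set.Icc y t, (T-u)^(2*α-2) := by
      rw [hψ3, MeasureTheory.integral_indicator measurableSet_Icc,
        Measure.restrict_restrict measurableSet_Icc,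
        Set.inter_eq_self_of_subset_left (Set.Icc_subset_Icc hy.1 htT'),
        integral_const_mul]
    rw [e3]
    have hI : (∫ u in Set.Icc y t, (T-u)^(2*α-2)) ≤ (T-y)^(2*α-1) / (2*α-1) := by
      have h1 := intIcc_rpow_le_pos hy.2 htT (r := 2*α-2) (by linarith)
      calc (∫ u in Set.Icc y t, (T-u)^(2*α-2)) ≤ (T-y)^(2*α-2+1) / (2*α-2+1) := h1
        _ = (T-y)^(2*α-1) / (2*α-1) := by rw [show (2*α-2+1 : ℝ) = 2*α-1 by ring]
    calc ((T-x)^(-α) * (T-y)^(-α)) * ∫ u in Set.Icc y t, (T-u)^(2*α-2)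
        ≤ ((T-x)^(-α) * (T-y)^(-α)) * ((T-y)^(2*α-1)/(2*α-1)) :=
          mul_le_mul_of_nonneg_left hI
            (mul_nonneg (Real.rpow_nonneg hx'.le _) (Real.rpow_nonneg hy'.le _))
      _ = (1/(2*α-1)) * ((T-x)^(-α) * (T-y)^(α-1)) := by
          rw [show (α-1 : ℝ) = -α + (2*α-1) by ring, Real.rpow_add hy']; ring
      _ ≤ (1/(2*α-1)) * ((T-x)^(ε-α) * (T-y)^(α-1-ε)) := by
          apply mul_le_mul_of_nonneg_left _ (one_div_nonneg.mpr h2α.le)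
          have h2 := pow_shift (a := T-x) (b := T-y) (εe := ε) (p := -α) (q := α-1) hy' hyx hε.le
          calc (T-x)^(-α) * (T-y)^(α-1) ≤ (T-x)^(-α+ε) * (T-y)^(α-1-ε) := h2
            _ = (T-x)^(ε-α) * (T-y)^(α-1-ε) := by rw [show (-α+ε:ℝ) = ε-α by ring]
  have hεinv : (1:ℝ)/ε = 4/(2*α-1) := by rw [hεdef, one_div_div]
  rw [hεinv] at hS2
  calc (∫ u in Set.Icc (0:ℝ) T, gker T α t x u * gker T α t y u)
      ≤ (1/L^2) * ((∫ u in Set.Icc (0:ℝ) T, ψ1 u) +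
        ((∫ u in Set.Icc (0:ℝ) T, ψ2 u) + (∫ u in Set.Icc (0:ℝ) T, ψ3 u))) := hmain
    _ ≤ (1/L^2) * ((1/(2*α-1)) * ((T-x)^(ε-α) * (T-y)^(α-1-ε)) +
        ((4/(2*α-1)) * ((T-x)^(ε-α) * (T-y)^(α-1-ε)) +
          (1/(2*α-1)) * ((T-x)^(ε-α) * (T-y)^(α-1-ε)))) := by
        apply mul_le_mul_of_nonneg_left _ (by positivity)
        linarith
    _ = 6/(2*α-1) / L^2 * ((T-x)^(ε-α) * (T-y)^(α-1-ε)) := by ring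

lemma contr_nonneg {T α t : ℝ} (hα : 1/2 < α) (htT : t < T) (x y : ℝ) :
    0 ≤ ∫ u in Set.Icc (0:ℝ) T, gker T α t x u * gker T α t y u :=
  setIntegral_nonneg measurableSet_Icc
    (fun u _ => mul_nonneg (gker_nonneg hα htT x u) (gker_nonneg hα htT y u))

lemma contr_le_all {T α t : ℝ} (hT : 0 < T) (hα : 1/2 < α) (htT : t < T)
    (hL : 1 ≤ |Real.log (T-t)|) (x y : ℝ) :
    ∫ u in Set.Icc (0:ℝ) T, gker T α t x u * gker T α t y u ≤
      6/(2*α-1) / |Real.log (T-t)|^2 *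
        (if x ∈ Set.Icc (0:ℝ) t ∧ y ∈ Set.Icc (0:ℝ) t then
          (T - min x y) ^ ((2*α-1)/4 - α) * (T - max x y) ^ (α - 1 - (2*α-1)/4) else 0) := by
  by_cases hm : x ∈ Set.Icc (0:ℝ) t ∧ y ∈ Set.Icc (0:ℝ) t
  · rw [if_pos hm]
    rcases le_total x y with hxy | hxy
    · rw [min_eq_left hxy, max_eq_right hxy]
      exact contr_le_aux hT hα htT hL hxy hm.1 hm.2
    · rw [min_eq_right hxy, max_eq_left hxy]
      have h := contr_le_aux hT hα htT hL hxy hm.2 hm.1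
      have he : (fun u => gker T α t x u * gker T α t y u) =
          (fun u => gker T α t y u * gker T α t x u) := by funext u; ring
      calc ∫ u in Set.Icc (0:ℝ) T, gker T α t x u * gker T α t y u
          = ∫ u in Set.Icc (0:ℝ) T, gker T α t y u * gker T α t x u := by rw [he]
        _ ≤ _ := h
  · rw [if_neg hm, mul_zero]
    have hz : ∀ u, gker T α t x u * gker T α t y u = 0 := by
      intro u
      rcases not_and_or.mp hm with h | h
      · rw [gker_zero h u, zero_mul]
      · rw [gker_zero h u, mul_zero]
    simp only [hz, integral_zero, le_refl]

lemma inner_le {T α t : ℝ} (hT : 0 < T) (hα : 1/2 < α) (htT : t < T)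
    (hL : 1 ≤ |Real.log (T-t)|) (x : ℝ) :
    (∫ v in Set.Icc (0:ℝ) T,
        (∫ u in Set.Icc (0:ℝ) T, gker T α t x u * gker T α t v u) *
        (∫ u in Set.Icc (0:ℝ) T, gker T α t x u * gker T α t v u)) ≤
      (6/(2*α-1))^2 / |Real.log (T-t)|^4 * (4/(2*α-1)) *
        (Set.Icc (0:ℝ) t).indicator (fun z => (T-z)^(-1:ℝ)) x := by
  have hL0 : (0:ℝ) < |Real.log (T-t)| := lt_of_lt_of_le one_pos hL
  set L := |Real.log (T-t)| with hLdef
  set ε := (2*α-1)/4 with hεdef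
  have hε : 0 < ε := by rw [hεdef]; linarith
  have h2α : (0:ℝ) < 2*α-1 := by linarith
  have ht' : (0:ℝ) < T - t := by linarith
  have htT' : t ≤ T := by linarith
  by_cases hx : x ∈ Set.Icc (0:ℝ) t
  case neg =>
    have hz : ∀ v, (∫ u in Set.Icc (0:ℝ) T, gker T α t x u * gker T α t v u) = 0 := by
      intro v
      have : ∀ u, gker T α t x u * gker T α t v u = 0 := fun u => by
        rw [gker_zero hx u, zero_mul]
      simp only [this, integral_zero]
    rw [Set.indicator_of_notMem hx, mul_zero]
    simp only [hz, zero_mul, integral_zero, le_refl]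
  case pos =>
  have hx' : (0:ℝ) < T - x := by have := hx.2; linarith
  have hxT : x ≤ T := by linarith
  set χ1 : ℝ → ℝ :=
    (Set.Icc (0:ℝ) x).indicator (fun v => (T-x)^(2*α-2-2*ε) * (T-v)^(2*ε-2*α)) with hχ1
  set χ2 : ℝ → ℝ :=
    (Set.Icc x t).indicator (fun v => (T-x)^(2*ε-2*α) * (T-v)^(2*α-2-2*ε)) with hχ2
  have hχ1n : ∀ v, 0 ≤ χ1 v := by
    intro v
    apply Set.indicator_nonneg
    intro w hw
    have : (0:ℝ) < T - w := by have := hw.2; linarith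
    exact mul_nonneg (Real.rpow_nonneg hx'.le _) (Real.rpow_nonneg this.le _)
  have hχ2n : ∀ v, 0 ≤ χ2 v := by
    intro v
    apply Set.indicator_nonneg
    intro w hw
    have : (0:ℝ) < T - w := by have := hw.2; linarith
    exact mul_nonneg (Real.rpow_nonneg hx'.le _) (Real.rpow_nonneg this.le _)
  have hint1 : Integrable χ1 (volume.restrict (Set.Icc (0:ℝ) T)) :=
    (MeasureTheory.IntegrableOn.integrable_indicator
      ((intOn_rpow (show x < T by linarith) (2*ε-2*α)).const_mul _) measurableSet_Icc).restrict
  have hint2 : Integrable χ2 (volume.restrict (Set.Icc (0:ℝ) T)) :=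
    (MeasureTheory.IntegrableOn.integrable_indicator
      ((intOn_rpow htT (2*α-2-2*ε)).const_mul _) measurableSet_Icc).restrict
  have hpt : ∀ v, (∫ u in Set.Icc (0:ℝ) T, gker T α t x u * gker T α t v u) *
      (∫ u in Set.Icc (0:ℝ) T, gker T α t x u * gker T α t v u) ≤
      ((6/(2*α-1))^2 / L^4) * (χ1 v + χ2 v) := by
    intro v
    have hC0 := contr_nonneg (T := T) hα htT x v
    have hCle := contr_le_all hT hα htT hL x v
    set Kv : ℝ := (if x ∈ Set.Icc (0:ℝ) t ∧ v ∈ Set.Icc (0:ℝ) t then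
      (T - min x v) ^ (ε - α) * (T - max x v) ^ (α - 1 - ε) else 0) with hKv
    have hKv0 : 0 ≤ Kv := by
      rw [hKv]
      split_ifs with h
      · have h1 : (0:ℝ) ≤ T - min x v := by
          have := min_le_left x v
          have := hx.2
          linarith
        have h2 : (0:ℝ) ≤ T - max x v := by
          have := max_le hx.2 h.2.2
          linarith
        exact mul_nonneg (Real.rpow_nonneg h1 _) (Real.rpow_nonneg h2 _)
      · exact le_refl _
    have hKsq : Kv * Kv ≤ χ1 v + χ2 v := by
      rw [hKv]
      by_cases hv : v ∈ Set.Icc (0:ℝ) t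
      · rw [if_pos ⟨hx, hv⟩]
        have hv' : (0:ℝ) < T - v := by have := hv.2; linarith
        rcases le_total v x with h | h
        · rw [min_eq_right h, max_eq_left h]
          have heq : ((T-v)^(ε-α) * (T-x)^(α-1-ε)) * ((T-v)^(ε-α) * (T-x)^(α-1-ε)) =
              (T-x)^(2*α-2-2*ε) * (T-v)^(2*ε-2*α) := by
            rw [show (2*ε-2*α:ℝ) = (ε-α)+(ε-α) by ring,
              show (2*α-2-2*ε:ℝ) = (α-1-ε)+(α-1-ε) by ring,
              Real.rpow_add hv', Real.rpow_add hx']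
            ring
          rw [heq]
          have hm : χ1 v = (T-x)^(2*α-2-2*ε) * (T-v)^(2*ε-2*α) :=
            Set.indicator_of_mem (Set.mem_Icc.mpr ⟨hv.1, h⟩) _
          have := hχ2n v
          linarith [hm.ge]
        · rw [min_eq_left h, max_eq_right h]
          have heq : ((T-x)^(ε-α) * (T-v)^(α-1-ε)) * ((T-x)^(ε-α) * (T-v)^(α-1-ε)) =
              (T-x)^(2*ε-2*α) * (T-v)^(2*α-2-2*ε) := by
            rw [show (2*ε-2*α:ℝ) = (ε-α)+(ε-α) by ring,
              show (2*α-2-2*ε:ℝ) = (α-1-ε)+(α-1-ε) by ring,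
              Real.rpow_add hv', Real.rpow_add hx']
            ring
          rw [heq]
          have hm : χ2 v = (T-x)^(2*ε-2*α) * (T-v)^(2*α-2-2*ε) :=
            Set.indicator_of_mem (Set.mem_Icc.mpr ⟨h, hv.2⟩) _
          have := hχ1n v
          linarith [hm.ge]
      · rw [if_neg (fun hc => hv hc.2), zero_mul]
        have := hχ1n v
        have := hχ2n v
        linarith
    calc (∫ u in Set.Icc (0:ℝ) T, gker T α t x u * gker T α t v u) *
        (∫ u in Set.Icc (0:ℝ) T, gker T α t x u * gker T α t v u)
        ≤ (6/(2*α-1) / L^2 * Kv) * (6/(2*α-1) / L^2 * Kv) :=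
          mul_self_le_mul_self hC0 hCle
      _ = ((6/(2*α-1))^2 / L^4) * (Kv * Kv) := by ring
      _ ≤ ((6/(2*α-1))^2 / L^4) * (χ1 v + χ2 v) := by
          apply mul_le_mul_of_nonneg_left hKsq
          positivity
  have hmain := integral_mono_of_nonneg (μ := volume.restrict (Set.Icc (0:ℝ) T))
    (ae_of_all _ (fun v => mul_nonneg (contr_nonneg hα htT x v) (contr_nonneg hα htT x v)))
    ((hint1.add hint2).const_mul ((6/(2*α-1))^2 / L^4)) (ae_of_all _ hpt)
  have hsplit : (∫ v in Set.Icc (0:ℝ) T, ((6/(2*α-1))^2 / L^4) * (χ1 v + χ2 v)) =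
      ((6/(2*α-1))^2 / L^4) * ((∫ v in Set.Icc (0:ℝ) T, χ1 v) + ∫ v in Set.Icc (0:ℝ) T, χ2 v) := by
    rw [integral_const_mul, integral_add hint1 hint2]
  have hI1 : (∫ v in Set.Icc (0:ℝ) T, χ1 v) ≤ (2/(2*α-1)) * (T-x)^(-1:ℝ) := by
    have e1 : (∫ v in Set.Icc (0:ℝ) T, χ1 v) =
        (T-x)^(2*α-2-2*ε) * ∫ v in Set.Icc (0:ℝ) x, (T-v)^(2*ε-2*α) := by
      rw [hχ1, MeasureTheory.integral_indicator measurableSet_Icc,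
        Measure.restrict_restrict measurableSet_Icc,
        Set.inter_eq_self_of_subset_left (Set.Icc_subset_Icc le_rfl hxT), integral_const_mul]
    rw [e1]
    have hI := intIcc_rpow_le_neg (a := (0:ℝ)) hx.1 (show x < T by linarith)
      (r := 2*ε-2*α) (by rw [hεdef]; linarith)
    calc (T-x)^(2*α-2-2*ε) * ∫ v in Set.Icc (0:ℝ) x, (T-v)^(2*ε-2*α)
        ≤ (T-x)^(2*α-2-2*ε) * ((T-x)^(2*ε-2*α+1) / (-(2*ε-2*α+1))) :=
          mul_le_mul_of_nonneg_left hI (Real.rpow_nonneg hx'.le _)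
      _ = (2/(2*α-1)) * (T-x)^(-1:ℝ) := by
          have hmerge : (T-x)^(2*α-2-2*ε) * (T-x)^(2*ε-2*α+1) = (T-x)^(-1:ℝ) := by
            rw [← Real.rpow_add hx']; congr 1; ring
          have hc : -(2*ε-2*α+1) = (2*α-1)/2 := by rw [hεdef]; ring
          calc (T-x)^(2*α-2-2*ε) * ((T-x)^(2*ε-2*α+1) / (-(2*ε-2*α+1)))
              = ((T-x)^(2*α-2-2*ε) * (T-x)^(2*ε-2*α+1)) * (1/(-(2*ε-2*α+1))) := by ring
            _ = (T-x)^(-1:ℝ) * (1/((2*α-1)/2)) := by rw [hmerge, hc]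
            _ = (2/(2*α-1)) * (T-x)^(-1:ℝ) := by rw [one_div_div]; ring
  have hI2 : (∫ v in Set.Icc (0:ℝ) T, χ2 v) ≤ (2/(2*α-1)) * (T-x)^(-1:ℝ) := by
    have e2 : (∫ v in Set.Icc (0:ℝ) T, χ2 v) =
        (T-x)^(2*ε-2*α) * ∫ v in Set.Icc x t, (T-v)^(2*α-2-2*ε) := by
      rw [hχ2, MeasureTheory.integral_indicator measurableSet_Icc,
        Measure.restrict_restrict measurableSet_Icc,
        Set.inter_eq_self_of_subset_left (Set.Icc_subset_Icc hx.1 htT'), integral_const_mul]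
    rw [e2]
    have hI := intIcc_rpow_le_pos hx.2 htT (r := 2*α-2-2*ε) (by rw [hεdef]; linarith)
    calc (T-x)^(2*ε-2*α) * ∫ v in Set.Icc x t, (T-v)^(2*α-2-2*ε)
        ≤ (T-x)^(2*ε-2*α) * ((T-x)^(2*α-2-2*ε+1) / (2*α-2-2*ε+1)) :=
          mul_le_mul_of_nonneg_left hI (Real.rpow_nonneg hx'.le _)
      _ = (2/(2*α-1)) * (T-x)^(-1:ℝ) := by
          have hmerge : (T-x)^(2*ε-2*α) * (T-x)^(2*α-2-2*ε+1) = (T-x)^(-1:ℝ) := by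
            rw [← Real.rpow_add hx']; congr 1; ring
          have hc : 2*α-2-2*ε+1 = (2*α-1)/2 := by rw [hεdef]; ring
          calc (T-x)^(2*ε-2*α) * ((T-x)^(2*α-2-2*ε+1) / (2*α-2-2*ε+1))
              = ((T-x)^(2*ε-2*α) * (T-x)^(2*α-2-2*ε+1)) * (1/(2*α-2-2*ε+1)) := by ring
            _ = (T-x)^(-1:ℝ) * (1/((2*α-1)/2)) := by rw [hmerge, hc]
            _ = (2/(2*α-1)) * (T-x)^(-1:ℝ) := by rw [one_div_div]; ring
  rw [Set.indicator_of_mem hx]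
  calc (∫ v in Set.Icc (0:ℝ) T,
        (∫ u in Set.Icc (0:ℝ) T, gker T α t x u * gker T α t v u) *
        (∫ u in Set.Icc (0:ℝ) T, gker T α t x u * gker T α t v u))
      ≤ ∫ v in Set.Icc (0:ℝ) T, ((6/(2*α-1))^2 / L^4) * (χ1 v + χ2 v) := hmain
    _ = ((6/(2*α-1))^2 / L^4) * ((∫ v in Set.Icc (0:ℝ) T, χ1 v) + ∫ v in Set.Icc (0:ℝ) T, χ2 v) := hsplit
    _ ≤ ((6/(2*α-1))^2 / L^4) * ((2/(2*α-1)) * (T-x)^(-1:ℝ) + (2/(2*α-1)) * (T-x)^(-1:ℝ)) := by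
        apply mul_le_mul_of_nonneg_left (by linarith) (by positivity)
    _ = (6/(2*α-1))^2 / L^4 * (4/(2*α-1)) * (T-x)^(-1:ℝ) := by ring

lemma normSq_le {T α t : ℝ} (hT : 0 < T) (hα : 1/2 < α) (ht0 : 0 ≤ t) (htT : t < T)
    (hL : 1 ≤ |Real.log (T-t)|) :
    (∫ x in Set.Icc (0:ℝ) T, ∫ v in Set.Icc (0:ℝ) T,
        (∫ u in Set.Icc (0:ℝ) T, gker T α t x u * gker T α t v u) *
        (∫ u in Set.Icc (0:ℝ) T, gker T α t x u * gker T α t v u)) ≤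
      (6/(2*α-1))^2 / |Real.log (T-t)|^4 * (4/(2*α-1)) *
        (Real.log T - Real.log (T-t)) := by
  have h2α : (0:ℝ) < 2*α-1 := by linarith
  have hL0 : (0:ℝ) < |Real.log (T-t)| := lt_of_lt_of_le one_pos hL
  set L := |Real.log (T-t)| with hLdef
  set c : ℝ := (6/(2*α-1))^2 / L^4 * (4/(2*α-1)) with hc
  have hc0 : (0:ℝ) ≤ c := by
    rw [hc]
    exact mul_nonneg (by positivity) (div_nonneg (by norm_num) h2α.le)
  have hg : Integrable (fun x => c * (Set.Icc (0:ℝ) t).indicator (fun z => (T-z)^(-1:ℝ)) x)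
      (volume.restrict (Set.Icc (0:ℝ) T)) :=
    ((MeasureTheory.IntegrableOn.integrable_indicator (intOn_rpow htT (-1:ℝ))
      measurableSet_Icc).restrict).const_mul c
  have h := integral_mono_of_nonneg (μ := volume.restrict (Set.Icc (0:ℝ) T))
    (ae_of_all _ (fun x => setIntegral_nonneg measurableSet_Icc
      (fun v _ => mul_nonneg (contr_nonneg hα htT x v) (contr_nonneg hα htT x v))))
    hg (ae_of_all _ (fun x => inner_le hT hα htT hL x))
  have heval : (∫ x in Set.Icc (0:ℝ) T,
      c * (Set.Icc (0:ℝ) t).indicator (fun z => (T-z)^(-1:ℝ)) x) =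
      c * (Real.log T - Real.log (T-t)) := by
    rw [integral_const_mul, MeasureTheory.integral_indicator measurableSet_Icc,
      Measure.restrict_restrict measurableSet_Icc,
      Set.inter_eq_self_of_subset_left (Set.Icc_subset_Icc le_rfl (by linarith)),
      intIcc_neg_one ht0 htT, sub_zero]
  calc (∫ x in Set.Icc (0:ℝ) T, ∫ v in Set.Icc (0:ℝ) T,
        (∫ u in Set.Icc (0:ℝ) T, gker T α t x u * gker T α t v u) *
        (∫ u in Set.Icc (0:ℝ) T, gker T α t x u * gker T α t v u))
      ≤ ∫ x in Set.Icc (0:ℝ) T,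
          c * (Set.Icc (0:ℝ) t).indicator (fun z => (T-z)^(-1:ℝ)) x := h
    _ = c * (Real.log T - Real.log (T-t)) := heval

theorem stmt_11 (T α : ℝ) (hT : 0 < T) (hα : 1 / 2 < α) :
    ∃ C > 0, ∀ t : ℝ, max 0 (T - 1 / Real.exp 1) < t → t < T →
      Real.sqrt (normSq T (contr T (gker T α t) (gker T α t)))
        ≤ C / (lam T α t) ^ ((3 : ℝ) / 2) := by
  simp only [normSq, ip, contr, lam]
  have h2α : (0:ℝ) < 2*α-1 := by linarith
  set c6 : ℝ := (6/(2*α-1))^2 * (4/(2*α-1)) * (|Real.log T| + 1) with hc6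
  have hc6pos : 0 < c6 := by
    rw [hc6]
    exact mul_pos (mul_pos (pow_pos (div_pos (by norm_num) h2α) 2)
      (div_pos (by norm_num) h2α)) (by positivity)
  refine ⟨Real.sqrt c6 / (2*α-1) ^ ((3:ℝ)/2),
    div_pos (Real.sqrt_pos.mpr hc6pos) (Real.rpow_pos_of_pos h2α _), ?_⟩
  intro t ht1 ht2
  have ht0 : 0 < t := lt_of_le_of_lt (le_max_left _ _) ht1
  have ht' : (0:ℝ) < T - t := by linarith
  have hDe : T - t < 1 / Real.exp 1 := by
    have h := lt_of_le_of_lt (le_max_right (0:ℝ) (T - 1/Real.exp 1)) ht1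
    linarith
  have hL : 1 ≤ |Real.log (T - t)| := by
    have hlt : Real.log (T - t) < -1 := by
      have h1 : Real.log (T - t) < Real.log (1 / Real.exp 1) := Real.log_lt_log ht' hDe
      rwa [Real.log_div one_ne_zero (Real.exp_ne_zero 1), Real.log_one, Real.log_exp,
        zero_sub] at h1
    calc (1:ℝ) ≤ -(Real.log (T-t)) := by linarith
      _ ≤ |Real.log (T-t)| := neg_le_abs _
  set L := |Real.log (T - t)| with hLdef
  have hL0 : (0:ℝ) < L := lt_of_lt_of_le one_pos hL
  have hns : (∫ x in Set.Icc (0:ℝ) T, ∫ v in Set.Icc (0:ℝ) T,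
      (∫ u in Set.Icc (0:ℝ) T, gker T α t x u * gker T α t v u) *
      (∫ u in Set.Icc (0:ℝ) T, gker T α t x u * gker T α t v u)) ≤ c6 / L^3 := by
    have h1 := normSq_le hT hα ht0.le ht2 hL
    have hlogb : Real.log T - Real.log (T-t) ≤ (|Real.log T| + 1) * L := by
      have e1 : Real.log T ≤ |Real.log T| := le_abs_self _
      have e2 : -Real.log (T-t) ≤ L := neg_le_abs _
      nlinarith [abs_nonneg (Real.log T)]
    have hpref : (0:ℝ) ≤ (6/(2*α-1))^2 / L^4 * (4/(2*α-1)) :=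
      mul_nonneg (by positivity) (div_nonneg (by norm_num) h2α.le)
    calc (∫ x in Set.Icc (0:ℝ) T, ∫ v in Set.Icc (0:ℝ) T,
        (∫ u in Set.Icc (0:ℝ) T, gker T α t x u * gker T α t v u) *
        (∫ u in Set.Icc (0:ℝ) T, gker T α t x u * gker T α t v u))
        ≤ (6/(2*α-1))^2 / L^4 * (4/(2*α-1)) * (Real.log T - Real.log (T-t)) := h1
      _ ≤ (6/(2*α-1))^2 / L^4 * (4/(2*α-1)) * ((|Real.log T| + 1) * L) :=
          mul_le_mul_of_nonneg_left hlogb hpref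
      _ = c6 / L^3 := by
          rw [hc6]
          field_simp
  calc Real.sqrt (∫ x in Set.Icc (0:ℝ) T, ∫ v in Set.Icc (0:ℝ) T,
      (∫ u in Set.Icc (0:ℝ) T, gker T α t x u * gker T α t v u) *
      (∫ u in Set.Icc (0:ℝ) T, gker T α t x u * gker T α t v u))
      ≤ Real.sqrt (c6 / L^3) := Real.sqrt_le_sqrt hns
    _ = Real.sqrt c6 / L ^ ((3:ℝ)/2) := by
        rw [Real.sqrt_eq_rpow, Real.sqrt_eq_rpow,
          Real.div_rpow hc6pos.le (by positivity),
          show (L^3 : ℝ) = L ^ ((3:ℕ):ℝ) from (Real.rpow_natCast L 3).symm,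
          ← Real.rpow_mul hL0.le]
        norm_num
    _ = Real.sqrt c6 / (2*α-1) ^ ((3:ℝ)/2) / (L / (2 * α - 1)) ^ ((3:ℝ)/2) := by
        rw [Real.div_rpow hL0.le h2α.le]
        have hne1 : (2*α-1) ^ ((3:ℝ)/2) ≠ 0 := (Real.rpow_pos_of_pos h2α _).ne'
        have hne2 : L ^ ((3:ℝ)/2) ≠ 0 := (Real.rpow_pos_of_pos hL0 _).ne'
        field_simp
end

section
/- There exists a constant C > 0, depending only on α and T, such that for all t sufficiently near T (with max(0, T − 1/e) < t < T) one has ψ₁(t) := (1/b_t²)·√( (b_t² − 2‖f_t‖²)² + 8‖f_t ⊗₁ f_t‖² ) ≤ C/√|log(T−t)|. -/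
open MeasureTheory Real Filter Topology

open Set

lemma contOn_T_sub_rpow (T a b c : ℝ) (hb : b < T) :
    ContinuousOn (fun y : ℝ => (T - y) ^ c) (Set.Icc a b) := by
  apply ContinuousOn.rpow_const (by fun_prop)
  intro x hx
  left
  have : x ≤ b := hx.2
  nlinarith [hx.2]

lemma intInt_T_sub_rpow (T a b c : ℝ) (hab : a ≤ b) (hb : b < T) :
    IntervalIntegrable (fun y : ℝ => (T - y) ^ c) volume a b := by
  apply ContinuousOn.intervalIntegrable
  rw [Set.uIcc_of_le hab]
  exact contOn_T_sub_rpow T a b c hb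

lemma integral_T_sub_rpow (T a b c : ℝ) (hab : a ≤ b) (hb : b < T) (hc : c ≠ -1) :
    ∫ y in a..b, (T - y) ^ c = ((T - a) ^ (c+1) - (T - b) ^ (c+1)) / (c+1) := by
  have h := intervalIntegral.integral_comp_sub_left (fun x : ℝ => x ^ c) T (a := a) (b := b)
  rw [h, integral_rpow (Or.inr ⟨hc, by
    rw [Set.uIcc_of_le (by linarith)]
    intro h0
    have := h0.1; linarith⟩)]

lemma integral_T_sub_inv (T a b : ℝ) (hab : a ≤ b) (hb : b < T) :
    ∫ y in a..b, (T - y) ^ (-1 : ℝ) = Real.log (T - a) - Real.log (T - b) := by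
  have h1 : ∫ y in a..b, (T - y) ^ (-1 : ℝ) = ∫ y in a..b, (T - y)⁻¹ := by
    apply intervalIntegral.integral_congr
    intro y _
    simp [Real.rpow_neg_one]
  rw [h1]
  have h := intervalIntegral.integral_comp_sub_left (fun x : ℝ => x⁻¹) T (a := a) (b := b)
  rw [h, integral_inv (by
    rw [Set.uIcc_of_le (by linarith)]
    intro h0; have := h0.1; linarith)]
  rw [Real.log_div (by linarith) (by linarith)]

noncomputable def Kk (T t r : ℝ) (x y : ℝ) : ℝ :=
  if x ∈ Icc (0:ℝ) t ∧ y ∈ Icc (0:ℝ) t then (T - max x y)^(r-2) * (T - min x y)^(-r) else 0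

noncomputable def rho (T t r x : ℝ) : ℝ :=
  (T-x)^(r-2) * (((T-0)^(-r+1) - (T-x)^(-r+1))/(-r+1))
    + (T-x)^(-r) * (((T-x)^(r-2+1) - (T-t)^(r-2+1))/(r-2+1))

noncomputable def Vval (T t r : ℝ) : ℝ :=
  (2*(Real.log T - Real.log (T-t)) - 2*(1 - (T-t)^(r-1) * T^(1-r))/(r-1))/(r-1)

lemma Kk_nonneg (T t r x y : ℝ) (ht : t < T) : 0 ≤ Kk T t r x y := by
  unfold Kk
  split
  · rename_i h
    have h1 : max x y ≤ t := max_le h.1.2 h.2.2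
    have h2 : min x y ≤ t := le_trans (min_le_left x y) h.1.2
    have p1 : (0:ℝ) ≤ T - max x y := by linarith
    have p2 : (0:ℝ) ≤ T - min x y := by linarith
    exact mul_nonneg (Real.rpow_nonneg p1 _) (Real.rpow_nonneg p2 _)
  · exact le_refl 0

lemma Kk_symm (T t r x y : ℝ) : Kk T t r x y = Kk T t r y x := by
  unfold Kk
  by_cases h : x ∈ Icc (0:ℝ) t ∧ y ∈ Icc (0:ℝ) t
  · rw [if_pos h, if_pos (And.intro h.2 h.1), max_comm, min_comm]
  · rw [if_neg h, if_neg (fun h' => h (And.intro h'.2 h'.1))]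

lemma contOn_psi (T t x c d : ℝ) (ht : t < T) (hx : x ≤ t) :
    ContinuousOn (fun y : ℝ => (T - max x y)^c * (T - min x y)^d) (Icc 0 t) := by
  apply ContinuousOn.mul
  · apply ContinuousOn.rpow_const (by fun_prop)
    intro y hy; left
    have : max x y ≤ t := max_le hx hy.2
    nlinarith
  · apply ContinuousOn.rpow_const (by fun_prop)
    intro y hy; left
    have : min x y ≤ t := le_trans (min_le_left x y) hx
    nlinarith

lemma Kk_inner_eq (T t r x : ℝ) (hT : 0 < T) (ht0 : 0 ≤ t) (ht : t < T) (hr : 1 < r)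
    (hx : x ∈ Icc (0:ℝ) t) :
    ∫ y in Icc (0:ℝ) T, Kk T t r x y = rho T t r x := by
  have hx0 : 0 ≤ x := hx.1
  have hxt : x ≤ t := hx.2
  have hxT : x < T := lt_of_le_of_lt hxt ht
  have hfun : Kk T t r x = (Icc (0:ℝ) t).indicator
      (fun y => (T - max x y)^(r-2) * (T - min x y)^(-r)) := by
    funext y
    by_cases hy : y ∈ Icc (0:ℝ) t
    · simp [Kk, hx, hy, Set.indicator_of_mem hy]
    · simp [Kk, hy, Set.indicator_of_notMem hy]
  rw [hfun, setIntegral_indicator measurableSet_Icc, Set.Icc_inter_Icc]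
  have h1 : (0:ℝ) ⊔ 0 = 0 := by simp
  have h2 : T ⊓ t = t := min_eq_right ht.le
  rw [h1, h2, MeasureTheory.integral_Icc_eq_integral_Ioc,
    ← intervalIntegral.integral_of_le ht0]
  have hsplit := intervalIntegral.integral_add_adjacent_intervals
    (a := 0) (b := x) (c := t)
    (f := fun y => (T - max x y)^(r-2) * (T - min x y)^(-r)) (μ := volume)
    (by
      apply ContinuousOn.intervalIntegrable
      rw [Set.uIcc_of_le hx0]
      exact (contOn_psi T t x (r-2) (-r) ht hxt).mono (Icc_subset_Icc le_rfl hxt))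
    (by
      apply ContinuousOn.intervalIntegrable
      rw [Set.uIcc_of_le hxt]
      exact (contOn_psi T t x (r-2) (-r) ht hxt).mono (Icc_subset_Icc hx0 le_rfl))
  rw [← hsplit]
  have e1 : ∫ y in (0:ℝ)..x, (T - max x y)^(r-2) * (T - min x y)^(-r)
      = (T-x)^(r-2) * (((T-0)^(-r+1) - (T-x)^(-r+1))/(-r+1)) := by
    rw [intervalIntegral.integral_congr (g := fun y => (T-x)^(r-2) * (T - y)^(-r))
      (by
        intro y hy
        rw [Set.uIcc_of_le hx0] at hy
        simp only [max_eq_left hy.2, min_eq_right hy.2])]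
    rw [intervalIntegral.integral_const_mul,
      integral_T_sub_rpow T 0 x (-r) hx0 hxT (by intro h; nlinarith [h])]
  have e2 : ∫ y in x..t, (T - max x y)^(r-2) * (T - min x y)^(-r)
      = (T-x)^(-r) * (((T-x)^(r-2+1) - (T-t)^(r-2+1))/(r-2+1)) := by
    rw [intervalIntegral.integral_congr (g := fun y => (T - y)^(r-2) * (T-x)^(-r))
      (by
        intro y hy
        rw [Set.uIcc_of_le hxt] at hy
        simp only [max_eq_right hy.1, min_eq_left hy.1])]
    have : ∀ y : ℝ, (T - y)^(r-2) * (T-x)^(-r) = (T-x)^(-r) * (T - y)^(r-2) := by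
      intro y; ring
    simp only [this]
    rw [intervalIntegral.integral_const_mul,
      integral_T_sub_rpow T x t (r-2) hxt ht (by intro h; nlinarith [h])]
  rw [e1, e2, rho]

lemma contOn_rho (T t r : ℝ) (ht : t < T) : ContinuousOn (rho T t r) (Icc 0 t) := by
  unfold rho
  apply ContinuousOn.add
  · exact (contOn_T_sub_rpow T 0 t _ ht).mul
      ((continuousOn_const.sub (contOn_T_sub_rpow T 0 t _ ht)).div_const _)
  · exact (contOn_T_sub_rpow T 0 t _ ht).mul
      (((contOn_T_sub_rpow T 0 t _ ht).sub continuousOn_const).div_const _)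

lemma Kk_inner_indicator (T t r : ℝ) (hT : 0 < T) (ht0 : 0 ≤ t) (ht : t < T) (hr : 1 < r)
    (x : ℝ) :
    ∫ y in Icc (0:ℝ) T, Kk T t r x y = (Icc (0:ℝ) t).indicator (rho T t r) x := by
  by_cases hx : x ∈ Icc (0:ℝ) t
  · rw [Kk_inner_eq T t r x hT ht0 ht hr hx, Set.indicator_of_mem hx]
  · rw [Set.indicator_of_notMem hx]
    have h0 : (fun y => Kk T t r x y) = fun _ => (0:ℝ) := by
      funext y; simp [Kk, hx]
    rw [h0]
    simp

lemma int_ind_rho (T t r : ℝ) (ht : t < T) :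
    IntegrableOn ((Icc (0:ℝ) t).indicator (rho T t r)) (Icc (0:ℝ) T) := by
  exact (((contOn_rho T t r ht).integrableOn_Icc).integrable_indicator
    measurableSet_Icc).integrableOn

lemma Kk_integrableOn (T t r x : ℝ) (ht : t < T) :
    IntegrableOn (Kk T t r x) (Icc (0:ℝ) T) := by
  by_cases hx : x ∈ Icc (0:ℝ) t
  · have hfun : Kk T t r x = (Icc (0:ℝ) t).indicator
        (fun y => (T - max x y)^(r-2) * (T - min x y)^(-r)) := by
      funext y
      by_cases hy : y ∈ Icc (0:ℝ) t
      · simp [Kk, hx, hy, Set.indicator_of_mem hy]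
      · simp [Kk, hy, Set.indicator_of_notMem hy]
    rw [hfun]
    exact (((contOn_psi T t x _ _ ht hx.2).integrableOn_Icc).integrable_indicator
      measurableSet_Icc).integrableOn
  · have h0 : Kk T t r x = fun _ => (0:ℝ) := by funext y; simp [Kk, hx]
    rw [h0]
    exact integrableOn_zero

lemma integral_rho (T t r : ℝ) (hT : 0 < T) (ht0 : 0 ≤ t) (ht : t < T) (hr : 1 < r) :
    ∫ x in Icc (0:ℝ) t, rho T t r x = Vval T t r := by
  have hr1 : r - 1 ≠ 0 := by intro h; linarith [sub_eq_zero.mp h]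
  have hr2 : (-r + 1) ≠ 0 := by intro h; linarith
  have hr3 : (r - 2 + 1) ≠ 0 := by intro h; linarith
  rw [MeasureTheory.integral_Icc_eq_integral_Ioc, ← intervalIntegral.integral_of_le ht0]
  have key : ∀ x ∈ Set.uIcc (0:ℝ) t, rho T t r x =
      (2*(T-x)^(-1:ℝ) - (T-0)^(-r+1)*(T-x)^(r-2) - (T-t)^(r-2+1)*(T-x)^(-r)) * (1/(r-1)) := by
    intro x hx
    rw [Set.uIcc_of_le ht0] at hx
    have hxT : 0 < T - x := by have := hx.2; linarith
    have a1 : (T-x)^(r-2) * (T-x)^(-r+1) = (T-x)^(-1:ℝ) := by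
      rw [← Real.rpow_add hxT]; congr 1; ring
    have a2 : (T-x)^(-r) * (T-x)^(r-2+1) = (T-x)^(-1:ℝ) := by
      rw [← Real.rpow_add hxT]; congr 1; ring
    unfold rho
    rw [← mul_div_assoc, ← mul_div_assoc, mul_sub, mul_sub, a1, a2]
    field_simp
    ring
  rw [intervalIntegral.integral_congr key]
  rw [intervalIntegral.integral_mul_const]
  have i1 : IntervalIntegrable (fun x => 2*(T-x)^(-1:ℝ)) volume 0 t :=
    (intInt_T_sub_rpow T 0 t (-1) ht0 ht).const_mul 2
  have i2 : IntervalIntegrable (fun x => (T-0)^(-r+1)*(T-x)^(r-2)) volume 0 t :=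
    (intInt_T_sub_rpow T 0 t (r-2) ht0 ht).const_mul _
  have i3 : IntervalIntegrable (fun x => (T-t)^(r-2+1)*(T-x)^(-r)) volume 0 t :=
    (intInt_T_sub_rpow T 0 t (-r) ht0 ht).const_mul _
  rw [intervalIntegral.integral_sub (i1.sub i2) i3, intervalIntegral.integral_sub i1 i2,
    intervalIntegral.integral_const_mul, intervalIntegral.integral_const_mul,
    intervalIntegral.integral_const_mul,
    integral_T_sub_inv T 0 t ht0 ht,
    integral_T_sub_rpow T 0 t (r-2) ht0 ht (by intro h; nlinarith),
    integral_T_sub_rpow T 0 t (-r) ht0 ht (by intro h; nlinarith)]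
  have hTt : 0 < T - t := by linarith
  have b1 : (T-(0:ℝ)) = T := by ring
  rw [b1]
  have e1 : T^(-r+1) * ((T^(r-2+1) - (T-t)^(r-2+1)) / (r-2+1))
      = (1 - (T-t)^(r-1) * T^(1-r))/(r-1) := by
    have h1 : T^(-r+1) * T^(r-2+1) = 1 := by
      rw [← Real.rpow_add hT, show -r+1+(r-2+1) = (0:ℝ) by ring, Real.rpow_zero]
    have h2 : T^(-r+1) = T^(1-r) := by rw [show -r+1 = 1-r by ring]
    have h3 : r - 2 + 1 = r - 1 := by ring
    rw [← mul_div_assoc, mul_sub, h1, h3, ← h2]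
    ring
  have e2 : (T-t)^(r-2+1) * ((T^(-r+1) - (T-t)^(-r+1)) / (-r+1))
      = (1 - (T-t)^(r-1) * T^(1-r))/(r-1) := by
    have h1 : (T-t)^(r-2+1) * (T-t)^(-r+1) = 1 := by
      rw [← Real.rpow_add hTt, show r-2+1+(-r+1) = (0:ℝ) by ring, Real.rpow_zero]
    have h3 : r - 2 + 1 = r - 1 := by ring
    have h2 : T^(-r+1) = T^(1-r) := by rw [show -r+1 = 1-r by ring]
    rw [← mul_div_assoc, mul_sub, h1, h3, h2]
    rw [show (-r+1) = -(r-1) by ring, div_neg]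
    ring
  rw [e1, e2]
  unfold Vval
  ring

noncomputable def Dval (T t r : ℝ) : ℝ :=
  ((Real.log T - Real.log (T-t)) - (1 - (T-t)^(r-1)*T^(1-r))/(r-1))/(r-1)

lemma Vval_eq_two_Dval (T t r : ℝ) : Vval T t r = 2 * Dval T t r := by
  unfold Vval Dval; ring

lemma Kk_double (T t r : ℝ) (hT : 0 < T) (ht0 : 0 ≤ t) (ht : t < T) (hr : 1 < r) :
    ∫ x in Icc (0:ℝ) T, ∫ y in Icc (0:ℝ) T, Kk T t r x y = Vval T t r := by
  have h : ∀ x : ℝ, (∫ y in Icc (0:ℝ) T, Kk T t r x y)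
      = (Icc (0:ℝ) t).indicator (rho T t r) x := Kk_inner_indicator T t r hT ht0 ht hr
  simp only [h]
  rw [setIntegral_indicator measurableSet_Icc, Set.Icc_inter_Icc]
  have h1 : (0:ℝ) ⊔ 0 = 0 := by simp
  have h2 : T ⊓ t = t := min_eq_right ht.le
  rw [h1, h2, integral_rho T t r hT ht0 ht hr]

lemma bfun_integral (T α t : ℝ) (hT : 0 < T) (ht0 : 0 ≤ t) (ht : t < T) (hα : 1/2 < α) :
    (∫ s in (0:ℝ)..t, ∫ u in (0:ℝ)..s, (T - s)^(2*α-2) * (T-u)^(-(2*α)))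
      = Dval T t (2*α) := by
  have hb : (1:ℝ) < 2*α := by linarith
  have key : ∀ s ∈ Set.uIcc (0:ℝ) t, (∫ u in (0:ℝ)..s, (T - s)^(2*α-2)*(T-u)^(-(2*α)))
      = (T^(-(2*α)+1) * (T-s)^(2*α-2) - (T-s)^(-1:ℝ)) * (1/(-(2*α)+1)) := by
    intro s hs
    rw [Set.uIcc_of_le ht0] at hs
    have hsT : s < T := lt_of_le_of_lt hs.2 ht
    rw [intervalIntegral.integral_const_mul,
      integral_T_sub_rpow T 0 s (-(2*α)) hs.1 hsT (by intro h; nlinarith)]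
    have e : (T-s)^(2*α-2) * (T-s)^(-(2*α)+1) = (T-s)^(-1:ℝ) := by
      rw [← Real.rpow_add (by linarith)]; congr 1; ring
    rw [← mul_div_assoc, mul_sub, e, show T - (0:ℝ) = T by ring]
    ring
  rw [intervalIntegral.integral_congr key, intervalIntegral.integral_mul_const]
  have i1 : IntervalIntegrable (fun s : ℝ => T^(-(2*α)+1) * (T-s)^(2*α-2)) volume 0 t :=
    (intInt_T_sub_rpow T 0 t _ ht0 ht).const_mul _
  have i2 := intInt_T_sub_rpow T 0 t (-1:ℝ) ht0 ht
  rw [intervalIntegral.integral_sub i1 i2, intervalIntegral.integral_const_mul,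
    integral_T_sub_rpow T 0 t (2*α-2) ht0 ht (by intro h; nlinarith),
    integral_T_sub_inv T 0 t ht0 ht]
  have h1 : T^(-(2*α)+1) * T^(2*α-2+1) = 1 := by
    rw [← Real.rpow_add hT, show -(2*α)+1+(2*α-2+1) = (0:ℝ) by ring, Real.rpow_zero]
  have h2 : T^(-(2*α)+1) = T^(1-2*α) := by rw [show -(2*α)+1 = 1-2*α by ring]
  have d1 : 2*α - 1 ≠ 0 := by intro h; linarith
  have e : T^(-(2*α)+1) * ((T^(2*α-2+1) - (T-t)^(2*α-2+1))/(2*α-2+1))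
      = (1 - (T-t)^(2*α-1)*T^(1-2*α))/(2*α-1) := by
    rw [← mul_div_assoc, mul_sub, h1, h2, show 2*α-2+1 = 2*α-1 by ring]
    ring
  rw [show T - (0:ℝ) = T by ring, e]
  unfold Dval
  have d3 : -(2*α) + 1 ≠ 0 := by intro h; linarith
  field_simp
  ring

noncomputable def gnd (T t α : ℝ) (x u : ℝ) : ℝ :=
  if x ∈ Icc (0:ℝ) t ∧ u ∈ Icc (0:ℝ) t then (T - max x u)^(α-1) * (T - min x u)^(-α) else 0

noncomputable def psi4 (T α x y : ℝ) (u : ℝ) : ℝ :=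
  ((T - max x u)^(α-1) * (T - min x u)^(-α)) * ((T - max y u)^(α-1) * (T - min y u)^(-α))

noncomputable def Hf (T t α : ℝ) (x y : ℝ) : ℝ :=
  ∫ u in Icc (0:ℝ) T, gnd T t α x u * gnd T t α y u

lemma gnd_nonneg (T t α x u : ℝ) (ht : t < T) : 0 ≤ gnd T t α x u := by
  unfold gnd
  split
  · rename_i h
    have h1 : max x u ≤ t := max_le h.1.2 h.2.2
    have h2 : min x u ≤ t := le_trans (min_le_left x u) h.1.2
    have p1 : (0:ℝ) ≤ T - max x u := by linarith
    have p2 : (0:ℝ) ≤ T - min x u := by linarith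
    exact mul_nonneg (Real.rpow_nonneg p1 _) (Real.rpow_nonneg p2 _)
  · exact le_refl 0

lemma Hf_nonneg (T t α x y : ℝ) (ht : t < T) : 0 ≤ Hf T t α x y :=
  MeasureTheory.integral_nonneg fun u =>
    mul_nonneg (gnd_nonneg T t α x u ht) (gnd_nonneg T t α y u ht)

lemma Hf_symm (T t α x y : ℝ) : Hf T t α x y = Hf T t α y x := by
  unfold Hf
  congr 1
  funext u
  ring

lemma Hf_zero (T t α x y : ℝ) (h : ¬(x ∈ Icc (0:ℝ) t ∧ y ∈ Icc (0:ℝ) t)) :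
    Hf T t α x y = 0 := by
  unfold Hf
  rcases not_and_or.mp h with h | h
  · have hz : ∀ u : ℝ, gnd T t α x u * gnd T t α y u = 0 := by
      intro u
      have : gnd T t α x u = 0 := by simp [gnd, h]
      rw [this, zero_mul]
    simp only [hz, integral_zero]
  · have hz : ∀ u : ℝ, gnd T t α x u * gnd T t α y u = 0 := by
      intro u
      have : gnd T t α y u = 0 := by simp [gnd, h]
      rw [this, mul_zero]
    simp only [hz, integral_zero]

lemma Hf_le (T t α : ℝ) (hT : 0 < T) (ht0 : 0 ≤ t) (ht : t < T) (hα : 1/2 < α)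
    (x y : ℝ) (hx : x ∈ Icc (0:ℝ) t) (hy : y ∈ Icc (0:ℝ) t) (hxy : x ≤ y) :
    Hf T t α x y ≤ (T-x)^(-α) * (T-y)^(α-1)
      * (2/(2*α-1) + (Real.log (T-x) - Real.log (T-y))) := by
  have hβ : 0 < 2*α - 1 := by linarith
  have hx0 : 0 ≤ x := hx.1
  have hyt : y ≤ t := hy.2
  have hyT : y < T := lt_of_le_of_lt hyt ht
  have hxT : x < T := lt_of_le_of_lt hxy hyT
  have hTx : 0 < T - x := by linarith
  have hTy : 0 < T - y := by linarith
  have hTt : 0 < T - t := by linarith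
  have hfun : (fun u => gnd T t α x u * gnd T t α y u)
      = (Icc (0:ℝ) t).indicator (psi4 T α x y) := by
    funext u
    by_cases hu : u ∈ Icc (0:ℝ) t
    · simp [gnd, psi4, hx, hy, hu, Set.indicator_of_mem hu]
    · simp [gnd, hu, Set.indicator_of_notMem hu]
  have hHf : Hf T t α x y = ∫ u in (0:ℝ)..t, psi4 T α x y u := by
    unfold Hf
    rw [hfun, setIntegral_indicator measurableSet_Icc, Set.Icc_inter_Icc]
    have h1 : (0:ℝ) ⊔ 0 = 0 := by simp
    have h2 : T ⊓ t = t := min_eq_right ht.le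
    rw [h1, h2, MeasureTheory.integral_Icc_eq_integral_Ioc,
      ← intervalIntegral.integral_of_le ht0]
  have hcont : ContinuousOn (psi4 T α x y) (Icc (0:ℝ) t) :=
    (contOn_psi T t x (α-1) (-α) ht hx.2).mul (contOn_psi T t y (α-1) (-α) ht hyt)
  have hii : ∀ a b : ℝ, 0 ≤ a → a ≤ b → b ≤ t →
      IntervalIntegrable (psi4 T α x y) volume a b := by
    intro a b ha hab hbt
    apply ContinuousOn.intervalIntegrable
    rw [Set.uIcc_of_le hab]
    exact hcont.mono (Icc_subset_Icc ha hbt)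
  have hsplit : ∫ u in (0:ℝ)..t, psi4 T α x y u
      = (∫ u in (0:ℝ)..x, psi4 T α x y u) + (∫ u in x..y, psi4 T α x y u)
        + (∫ u in y..t, psi4 T α x y u) := by
    have h1 := intervalIntegral.integral_add_adjacent_intervals
      (hii 0 x le_rfl hx0 (hxy.trans hyt)) (hii x y hx0 hxy hyt)
    have h2 := intervalIntegral.integral_add_adjacent_intervals
      (hii 0 y le_rfl (hx0.trans hxy) hyt) (hii y t (hx0.trans hxy) hyt le_rfl)
    rw [← h2, ← h1]
  -- piece 1
  have e1 : ∫ u in (0:ℝ)..x, psi4 T α x y u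
      = ((T-x)^(α-1)*(T-y)^(α-1))
        * (((T-0)^(-(2*α)+1) - (T-x)^(-(2*α)+1))/(-(2*α)+1)) := by
    rw [intervalIntegral.integral_congr
      (g := fun u => ((T-x)^(α-1)*(T-y)^(α-1)) * (T-u)^(-(2*α)))
      (by
        intro u hu
        rw [Set.uIcc_of_le hx0] at hu
        have huy : u ≤ y := hu.2.trans hxy
        have huT : 0 < T - u := by linarith [hu.2]
        unfold psi4
        rw [max_eq_left hu.2, min_eq_right hu.2, max_eq_left huy, min_eq_right huy]
        have hc : (T-u)^(-α)*(T-u)^(-α) = (T-u)^(-(2*α)) := by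
          rw [← Real.rpow_add huT]; congr 1; ring
        calc (T-x)^(α-1)*(T-u)^(-α) * ((T-y)^(α-1)*(T-u)^(-α))
            = ((T-x)^(α-1)*(T-y)^(α-1)) * ((T-u)^(-α)*(T-u)^(-α)) := by ring
          _ = _ := by rw [hc])]
    rw [intervalIntegral.integral_const_mul,
      integral_T_sub_rpow T 0 x (-(2*α)) hx0 hxT (by intro h; nlinarith)]
  have b1 : ((T-x)^(α-1)*(T-y)^(α-1))
        * (((T-0)^(-(2*α)+1) - (T-x)^(-(2*α)+1))/(-(2*α)+1))
      ≤ (T-x)^(-α)*(T-y)^(α-1) * (1/(2*α-1)) := by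
    have key : ((T-0)^(-(2*α)+1) - (T-x)^(-(2*α)+1))/(-(2*α)+1)
        ≤ (T-x)^(-(2*α)+1)/(2*α-1) := by
      have h0 : ((T-0)^(-(2*α)+1) - (T-x)^(-(2*α)+1))/(-(2*α)+1)
          = ((T-x)^(-(2*α)+1) - (T-0)^(-(2*α)+1))/(2*α-1) := by
        rw [show -(2*α)+1 = -(2*α-1) by ring, div_neg, ← neg_div, neg_sub]
      rw [h0]
      apply (div_le_div_iff_of_pos_right hβ).mpr
      have : 0 ≤ (T-0)^(-(2*α)+1) := Real.rpow_nonneg (by linarith) _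
      linarith
    have hC : 0 ≤ (T-x)^(α-1)*(T-y)^(α-1) :=
      mul_nonneg (Real.rpow_nonneg hTx.le _) (Real.rpow_nonneg hTy.le _)
    calc ((T-x)^(α-1)*(T-y)^(α-1))
          * (((T-0)^(-(2*α)+1) - (T-x)^(-(2*α)+1))/(-(2*α)+1))
        ≤ ((T-x)^(α-1)*(T-y)^(α-1)) * ((T-x)^(-(2*α)+1)/(2*α-1)) :=
          mul_le_mul_of_nonneg_left key hC
      _ = ((T-x)^(α-1)*(T-x)^(-(2*α)+1)) * (T-y)^(α-1) * (1/(2*α-1)) := by ring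
      _ = (T-x)^(-α)*(T-y)^(α-1) * (1/(2*α-1)) := by
          rw [← Real.rpow_add hTx, show α-1+(-(2*α)+1) = -α by ring]
  -- piece 2
  have e2 : ∫ u in x..y, psi4 T α x y u
      = ((T-x)^(-α)*(T-y)^(α-1)) * (Real.log (T-x) - Real.log (T-y)) := by
    rw [intervalIntegral.integral_congr
      (g := fun u => ((T-x)^(-α)*(T-y)^(α-1)) * (T-u)^(-1:ℝ))
      (by
        intro u hu
        rw [Set.uIcc_of_le hxy] at hu
        have huT : 0 < T - u := by linarith [hu.2]
        unfold psi4
        rw [max_eq_right hu.1, min_eq_left hu.1, max_eq_left hu.2, min_eq_right hu.2]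
        have hc : (T-u)^(α-1)*(T-u)^(-α) = (T-u)^(-1:ℝ) := by
          rw [← Real.rpow_add huT]; congr 1; ring
        calc (T-u)^(α-1)*(T-x)^(-α) * ((T-y)^(α-1)*(T-u)^(-α))
            = ((T-x)^(-α)*(T-y)^(α-1)) * ((T-u)^(α-1)*(T-u)^(-α)) := by ring
          _ = _ := by rw [hc])]
    rw [intervalIntegral.integral_const_mul, integral_T_sub_inv T x y hxy hyT]
  -- piece 3
  have e3 : ∫ u in y..t, psi4 T α x y u
      = ((T-x)^(-α)*(T-y)^(-α))
        * (((T-y)^(2*α-2+1) - (T-t)^(2*α-2+1))/(2*α-2+1)) := by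
    rw [intervalIntegral.integral_congr
      (g := fun u => ((T-x)^(-α)*(T-y)^(-α)) * (T-u)^(2*α-2))
      (by
        intro u hu
        rw [Set.uIcc_of_le hyt] at hu
        have hux : x ≤ u := hxy.trans hu.1
        have huT : 0 < T - u := by linarith [hu.2]
        unfold psi4
        rw [max_eq_right hux, min_eq_left hux, max_eq_right hu.1, min_eq_left hu.1]
        have hc : (T-u)^(α-1)*(T-u)^(α-1) = (T-u)^(2*α-2) := by
          rw [← Real.rpow_add huT]; congr 1; ring
        calc (T-u)^(α-1)*(T-x)^(-α) * ((T-u)^(α-1)*(T-y)^(-α))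
            = ((T-x)^(-α)*(T-y)^(-α)) * ((T-u)^(α-1)*(T-u)^(α-1)) := by ring
          _ = _ := by rw [hc])]
    rw [intervalIntegral.integral_const_mul,
      integral_T_sub_rpow T y t (2*α-2) hyt ht (by intro h; nlinarith)]
  have b3 : ((T-x)^(-α)*(T-y)^(-α))
        * (((T-y)^(2*α-2+1) - (T-t)^(2*α-2+1))/(2*α-2+1))
      ≤ (T-x)^(-α)*(T-y)^(α-1) * (1/(2*α-1)) := by
    have key : ((T-y)^(2*α-2+1) - (T-t)^(2*α-2+1))/(2*α-2+1)
        ≤ (T-y)^(2*α-2+1)/(2*α-1) := by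
      rw [show 2*α-2+1 = 2*α-1 by ring]
      apply (div_le_div_iff_of_pos_right hβ).mpr
      have : 0 ≤ (T-t)^(2*α-1) := Real.rpow_nonneg hTt.le _
      linarith
    have hC : 0 ≤ (T-x)^(-α)*(T-y)^(-α) :=
      mul_nonneg (Real.rpow_nonneg hTx.le _) (Real.rpow_nonneg hTy.le _)
    calc ((T-x)^(-α)*(T-y)^(-α))
          * (((T-y)^(2*α-2+1) - (T-t)^(2*α-2+1))/(2*α-2+1))
        ≤ ((T-x)^(-α)*(T-y)^(-α)) * ((T-y)^(2*α-2+1)/(2*α-1)) :=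
          mul_le_mul_of_nonneg_left key hC
      _ = (T-x)^(-α) * ((T-y)^(-α)*(T-y)^(2*α-2+1)) * (1/(2*α-1)) := by ring
      _ = (T-x)^(-α)*(T-y)^(α-1) * (1/(2*α-1)) := by
          rw [← Real.rpow_add hTy, show -α+(2*α-2+1) = α-1 by ring]
  rw [hHf, hsplit, e1, e2, e3] at *
  have final : (T-x)^(-α) * (T-y)^(α-1)
      * (2/(2*α-1) + (Real.log (T-x) - Real.log (T-y)))
      = (T-x)^(-α)*(T-y)^(α-1) * (1/(2*α-1))
        + ((T-x)^(-α)*(T-y)^(α-1)) * (Real.log (T-x) - Real.log (T-y))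
        + (T-x)^(-α)*(T-y)^(α-1) * (1/(2*α-1)) := by ring
  rw [final]
  linarith [b1, b3]

lemma sq_bound_aux (T t α : ℝ) (hT : 0 < T) (ht0 : 0 ≤ t) (ht : t < T) (hα : 1/2 < α)
    (x y : ℝ) (hx : x ∈ Icc (0:ℝ) t) (hy : y ∈ Icc (0:ℝ) t) (hxy : x ≤ y) :
    (Hf T t α x y)^2 ≤ (8/(2*α-1)^2) * Kk T t (2*α) x y
      + (32/(2*α-1)^2) * Kk T t (α+1/2) x y := by
  have hβ : 0 < 2*α - 1 := by linarith
  have hyT : y < T := lt_of_le_of_lt hy.2 ht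
  have hxT : x < T := lt_of_le_of_lt hxy hyT
  have hTx : 0 < T - x := by linarith
  have hTy : 0 < T - y := by linarith
  set P : ℝ := (T-x)^(-α) * (T-y)^(α-1) with hP
  set l : ℝ := Real.log (T-x) - Real.log (T-y) with hl
  set c : ℝ := 2/(2*α-1) with hc
  have hP0 : 0 ≤ P := mul_nonneg (Real.rpow_nonneg hTx.le _) (Real.rpow_nonneg hTy.le _)
  have hl0 : 0 ≤ l := by
    rw [hl, sub_nonneg]
    exact Real.log_le_log hTy (by linarith)
  have hc0 : 0 ≤ c := by positivity
  have h1 : (Hf T t α x y)^2 ≤ (P*(c+l))^2 :=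
    pow_le_pow_left₀ (Hf_nonneg T t α x y ht) (Hf_le T t α hT ht0 ht hα x y hx hy hxy) 2
  -- bound l by rpow
  have hR : 1 ≤ (T-x)/(T-y) := (one_le_div hTy).mpr (by linarith)
  have hR0 : 0 < (T-x)/(T-y) := by positivity
  have hleq : l = Real.log ((T-x)/(T-y)) := by
    rw [Real.log_div (ne_of_gt hTx) (ne_of_gt hTy)]
  have hlle : l ≤ (4/(2*α-1)) * ((T-x)/(T-y))^((2*α-1)/4) := by
    rw [hleq]
    have h2 : Real.log ((T-x)/(T-y)) = (4/(2*α-1)) *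
        Real.log (((T-x)/(T-y))^((2*α-1)/4)) := by
      rw [Real.log_rpow hR0]
      field_simp
    rw [h2]
    have h3 : Real.log (((T-x)/(T-y))^((2*α-1)/4)) ≤ ((T-x)/(T-y))^((2*α-1)/4) := by
      have := Real.log_le_sub_one_of_pos (Real.rpow_pos_of_pos hR0 ((2*α-1)/4))
      linarith
    apply mul_le_mul_of_nonneg_left h3 (by positivity)
  have hlsq : l^2 ≤ (16/(2*α-1)^2) * ((T-x)/(T-y))^((2*α-1)/2) := by
    have h4 : ((4/(2*α-1)) * ((T-x)/(T-y))^((2*α-1)/4))^2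
        = (16/(2*α-1)^2) * ((T-x)/(T-y))^((2*α-1)/2) := by
      have : (((T-x)/(T-y))^((2*α-1)/4))^2
          = ((T-x)/(T-y))^((2*α-1)/2) := by
        rw [sq, ← Real.rpow_add hR0]
        congr 1; ring
      rw [mul_pow, this]
      congr 1
      rw [div_pow]; norm_num
    have h5 : l^2 ≤ ((4/(2*α-1)) * ((T-x)/(T-y))^((2*α-1)/4))^2 :=
      pow_le_pow_left₀ hl0 hlle 2
    rw [h4] at h5
    exact h5
  have h6 : (c+l)^2 ≤ 2*c^2 + 2*l^2 := by nlinarith [sq_nonneg (c - l)]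
  have h7 : (P*(c+l))^2 = P^2 * (c+l)^2 := by ring
  have h8 : P^2 * (c+l)^2 ≤ P^2 * (2*c^2 + (32/(2*α-1)^2) * ((T-x)/(T-y))^((2*α-1)/2)) := by
    apply mul_le_mul_of_nonneg_left _ (sq_nonneg P)
    have h9 := mul_le_mul_of_nonneg_left hlsq (by norm_num : (0:ℝ) ≤ 2)
    calc (c+l)^2 ≤ 2*c^2 + 2*l^2 := h6
      _ ≤ 2*c^2 + 2*(16/(2*α-1)^2 * ((T-x)/(T-y))^((2*α-1)/2)) := by linarith
      _ = 2*c^2 + (32/(2*α-1)^2) * ((T-x)/(T-y))^((2*α-1)/2) := by ring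
  -- identify Kk terms
  have hKmem : x ∈ Icc (0:ℝ) t ∧ y ∈ Icc (0:ℝ) t := ⟨hx, hy⟩
  have hK1 : Kk T t (2*α) x y = (T-y)^(2*α-2) * (T-x)^(-(2*α)) := by
    unfold Kk
    rw [if_pos hKmem, max_eq_right hxy, min_eq_left hxy]
  have hK2 : Kk T t (α+1/2) x y = (T-y)^(α+1/2-2) * (T-x)^(-(α+1/2)) := by
    unfold Kk
    rw [if_pos hKmem, max_eq_right hxy, min_eq_left hxy]
  have hP2 : P^2 = Kk T t (2*α) x y := by
    rw [hK1, hP, sq]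
    rw [show (T-x)^(-α) * (T-y)^(α-1) * ((T-x)^(-α) * (T-y)^(α-1))
        = ((T-y)^(α-1)*(T-y)^(α-1)) * ((T-x)^(-α)*(T-x)^(-α)) by ring,
      ← Real.rpow_add hTy, ← Real.rpow_add hTx]
    congr 2 <;> ring
  have hPR : P^2 * ((T-x)/(T-y))^((2*α-1)/2) = Kk T t (α+1/2) x y := by
    rw [hK2, hP, sq, Real.div_rpow hTx.le hTy.le]
    rw [div_eq_mul_inv, ← Real.rpow_neg hTy.le]
    rw [show (T-x)^(-α) * (T-y)^(α-1) * ((T-x)^(-α) * (T-y)^(α-1))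
        * ((T-x)^((2*α-1)/2) * (T-y)^(-((2*α-1)/2)))
        = ((T-y)^(α-1)*(T-y)^(α-1)*(T-y)^(-((2*α-1)/2)))
          * ((T-x)^(-α)*(T-x)^(-α)*(T-x)^((2*α-1)/2)) by ring,
      ← Real.rpow_add hTy, ← Real.rpow_add hTy, ← Real.rpow_add hTx, ← Real.rpow_add hTx]
    congr 2 <;> ring
  calc (Hf T t α x y)^2 ≤ (P*(c+l))^2 := h1
    _ = P^2 * (c+l)^2 := h7
    _ ≤ P^2 * (2*c^2 + (32/(2*α-1)^2) * ((T-x)/(T-y))^((2*α-1)/2)) := h8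
    _ = 2*c^2 * P^2 + (32/(2*α-1)^2) * (P^2 * ((T-x)/(T-y))^((2*α-1)/2)) := by ring
    _ = (8/(2*α-1)^2) * Kk T t (2*α) x y + (32/(2*α-1)^2) * Kk T t (α+1/2) x y := by
        rw [hPR, hP2, hc]
        congr 1
        rw [div_pow]
        ring_nf
  done

lemma sq_bound (T t α : ℝ) (hT : 0 < T) (ht0 : 0 ≤ t) (ht : t < T) (hα : 1/2 < α)
    (x y : ℝ) :
    (Hf T t α x y)^2 ≤ (8/(2*α-1)^2) * Kk T t (2*α) x y
      + (32/(2*α-1)^2) * Kk T t (α+1/2) x y := by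
  by_cases h : x ∈ Icc (0:ℝ) t ∧ y ∈ Icc (0:ℝ) t
  · rcases le_total x y with hxy | hxy
    · exact sq_bound_aux T t α hT ht0 ht hα x y h.1 h.2 hxy
    · have := sq_bound_aux T t α hT ht0 ht hα y x h.2 h.1 hxy
      rw [Hf_symm, Kk_symm T t (2*α) x y, Kk_symm T t (α+1/2) x y]
      exact this
  · rw [Hf_zero T t α x y h]
    unfold Kk
    rw [if_neg h, if_neg h]
    norm_num

lemma fker_mul (T α t : ℝ) (hlam : 0 < lam T α t) (x y u : ℝ) :
    fker T α t x u * fker T α t y u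
      = (1/(4*lam T α t)) * (gnd T t α x u * gnd T t α y u) := by
  have hs : Real.sqrt (lam T α t) * Real.sqrt (lam T α t) = lam T α t :=
    Real.mul_self_sqrt hlam.le
  have hx : fker T α t x u = (1/(2*Real.sqrt (lam T α t))) * gnd T t α x u := by
    unfold fker gnd
    split
    · ring
    · rw [mul_zero]
  have hy : fker T α t y u = (1/(2*Real.sqrt (lam T α t))) * gnd T t α y u := by
    unfold fker gnd
    split
    · ring
    · rw [mul_zero]
  rw [hx, hy]
  conv_rhs => rw [← hs]
  ring

lemma contr_eq (T α t : ℝ) (hlam : 0 < lam T α t) (x y : ℝ) :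
    contr T (fker T α t) (fker T α t) x y = (1/(4*lam T α t)) * Hf T t α x y := by
  unfold contr Hf
  simp only [fker_mul T α t hlam]
  rw [MeasureTheory.integral_const_mul]

lemma fker_sq (T α t : ℝ) (ht : t < T) (hlam : 0 < lam T α t) (u v : ℝ) :
    fker T α t u v * fker T α t u v = (1/(4*lam T α t)) * Kk T t (2*α) u v := by
  rw [fker_mul T α t hlam]
  congr 1
  unfold gnd Kk
  split
  · rename_i h
    have h1 : max u v ≤ t := max_le h.1.2 h.2.2
    have h2 : min u v ≤ t := le_trans (min_le_left u v) h.1.2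
    have p1 : (0:ℝ) < T - max u v := by linarith
    have p2 : (0:ℝ) < T - min u v := by linarith
    have a1 : (T - max u v)^(α-1) * (T - max u v)^(α-1) = (T - max u v)^(2*α-2) := by
      rw [← Real.rpow_add p1]; congr 1; ring
    have a2 : (T - min u v)^(-α) * (T - min u v)^(-α) = (T - min u v)^(-(2*α)) := by
      rw [← Real.rpow_add p2]; congr 1; ring
    calc (T - max u v)^(α-1) * (T - min u v)^(-α) * ((T - max u v)^(α-1) * (T - min u v)^(-α))
        = ((T - max u v)^(α-1) * (T - max u v)^(α-1))
          * ((T - min u v)^(-α) * (T - min u v)^(-α)) := by ring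
      _ = _ := by rw [a1, a2]
  · rw [mul_zero]

lemma normSq_fker (T α t : ℝ) (hT : 0 < T) (ht0 : 0 ≤ t) (ht : t < T) (hα : 1/2 < α)
    (hlam : 0 < lam T α t) :
    normSq T (fker T α t) = (1/(4*lam T α t)) * Vval T t (2*α) := by
  unfold normSq ip
  simp only [fker_sq T α t ht hlam]
  simp only [MeasureTheory.integral_const_mul]
  rw [Kk_double T t (2*α) hT ht0 ht (by linarith)]

lemma G_bound (T α t : ℝ) (hT : 0 < T) (ht0 : 0 ≤ t) (ht : t < T) (hα : 1/2 < α)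
    (hlam : 0 < lam T α t) :
    normSq T (contr T (fker T α t) (fker T α t))
      ≤ (1/(16*(lam T α t)^2)) * ((8/(2*α-1)^2) * Vval T t (2*α)
          + (32/(2*α-1)^2) * Vval T t (α+1/2)) := by
  have hr2 : (1:ℝ) < 2*α := by linarith
  have hr' : (1:ℝ) < α+1/2 := by linarith
  have hsq : ∀ x y : ℝ, contr T (fker T α t) (fker T α t) x y
      * contr T (fker T α t) (fker T α t) x y
      = (1/(16*(lam T α t)^2)) * (Hf T t α x y)^2 := by
    intro x y
    rw [contr_eq T α t hlam]
    have h0 : lam T α t ≠ 0 := ne_of_gt hlam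
    field_simp
    ring
  have hG : normSq T (contr T (fker T α t) (fker T α t))
      = (1/(16*(lam T α t)^2)) * ∫ x in Icc (0:ℝ) T, ∫ y in Icc (0:ℝ) T, (Hf T t α x y)^2 := by
    unfold normSq ip
    simp only [hsq]
    simp only [MeasureTheory.integral_const_mul]
  rw [hG]
  apply mul_le_mul_of_nonneg_left _ (by positivity)
  -- inner bound
  have inner_le : ∀ x : ℝ, (∫ y in Icc (0:ℝ) T, (Hf T t α x y)^2)
      ≤ (8/(2*α-1)^2) * (Icc (0:ℝ) t).indicator (rho T t (2*α)) x
        + (32/(2*α-1)^2) * (Icc (0:ℝ) t).indicator (rho T t (α+1/2)) x := by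
    intro x
    have i1 : IntegrableOn (fun y => (8/(2*α-1)^2) * Kk T t (2*α) x y) (Icc (0:ℝ) T) :=
      (Kk_integrableOn T t (2*α) x ht).const_mul _
    have i2 : IntegrableOn (fun y => (32/(2*α-1)^2) * Kk T t (α+1/2) x y) (Icc (0:ℝ) T) :=
      (Kk_integrableOn T t (α+1/2) x ht).const_mul _
    have step : (∫ y in Icc (0:ℝ) T, (Hf T t α x y)^2)
        ≤ ∫ y in Icc (0:ℝ) T, ((8/(2*α-1)^2) * Kk T t (2*α) x y
            + (32/(2*α-1)^2) * Kk T t (α+1/2) x y) := by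
      apply MeasureTheory.integral_mono_of_nonneg
      · exact Filter.Eventually.of_forall fun y => sq_nonneg _
      · exact i1.add i2
      · exact Filter.Eventually.of_forall fun y => sq_bound T t α hT ht0 ht hα x y
    calc (∫ y in Icc (0:ℝ) T, (Hf T t α x y)^2)
        ≤ ∫ y in Icc (0:ℝ) T, ((8/(2*α-1)^2) * Kk T t (2*α) x y
            + (32/(2*α-1)^2) * Kk T t (α+1/2) x y) := step
      _ = (8/(2*α-1)^2) * (Icc (0:ℝ) t).indicator (rho T t (2*α)) x
          + (32/(2*α-1)^2) * (Icc (0:ℝ) t).indicator (rho T t (α+1/2)) x := by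
          rw [MeasureTheory.integral_add i1 i2, MeasureTheory.integral_const_mul,
            MeasureTheory.integral_const_mul,
            Kk_inner_indicator T t (2*α) hT ht0 ht hr2 x,
            Kk_inner_indicator T t (α+1/2) hT ht0 ht hr' x]
  have outer : (∫ x in Icc (0:ℝ) T, ∫ y in Icc (0:ℝ) T, (Hf T t α x y)^2)
      ≤ ∫ x in Icc (0:ℝ) T, ((8/(2*α-1)^2) * (Icc (0:ℝ) t).indicator (rho T t (2*α)) x
          + (32/(2*α-1)^2) * (Icc (0:ℝ) t).indicator (rho T t (α+1/2)) x) := by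
    apply MeasureTheory.integral_mono_of_nonneg
    · exact Filter.Eventually.of_forall fun x =>
        MeasureTheory.integral_nonneg fun y => sq_nonneg _
    · exact ((int_ind_rho T t (2*α) ht).const_mul _).add
        ((int_ind_rho T t (α+1/2) ht).const_mul _)
    · exact Filter.Eventually.of_forall inner_le
  calc (∫ x in Icc (0:ℝ) T, ∫ y in Icc (0:ℝ) T, (Hf T t α x y)^2)
      ≤ _ := outer
    _ = (8/(2*α-1)^2) * Vval T t (2*α) + (32/(2*α-1)^2) * Vval T t (α+1/2) := by
        rw [MeasureTheory.integral_add ((int_ind_rho T t (2*α) ht).const_mul _)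
          ((int_ind_rho T t (α+1/2) ht).const_mul _),
          MeasureTheory.integral_const_mul, MeasureTheory.integral_const_mul]
        rw [setIntegral_indicator measurableSet_Icc, setIntegral_indicator measurableSet_Icc,
          Set.Icc_inter_Icc]
        have h1 : (0:ℝ) ⊔ 0 = 0 := by simp
        have h2 : T ⊓ t = t := min_eq_right ht.le
        rw [h1, h2, integral_rho T t (2*α) hT ht0 ht hr2,
          integral_rho T t (α+1/2) hT ht0 ht hr']

lemma W_bounds (T t r : ℝ) (hT : 0 < T) (ht0 : 0 ≤ t) (ht : t < T) (hr : 1 < r) :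
    0 ≤ (T-t)^(r-1) * T^(1-r) ∧ (T-t)^(r-1) * T^(1-r) ≤ 1 := by
  have hTt : 0 < T - t := by linarith
  constructor
  · exact mul_nonneg (Real.rpow_nonneg hTt.le _) (Real.rpow_nonneg hT.le _)
  · have h1 : (T-t)^(r-1) ≤ T^(r-1) :=
      Real.rpow_le_rpow hTt.le (by linarith) (by linarith)
    have h2 : T^(1-r) = (T^(r-1))⁻¹ := by
      rw [show (1-r) = -(r-1) by ring, Real.rpow_neg hT.le]
    have h3 : 0 < T^(r-1) := Real.rpow_pos_of_pos hT _
    rw [h2]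
    calc (T-t)^(r-1) * (T^(r-1))⁻¹ ≤ T^(r-1) * (T^(r-1))⁻¹ :=
        mul_le_mul_of_nonneg_right h1 (by positivity)
      _ = 1 := mul_inv_cancel₀ (ne_of_gt h3)

lemma Vval_le (T t r : ℝ) (hT : 0 < T) (ht0 : 0 ≤ t) (ht : t < T) (hr : 1 < r)
    (hL1 : 1 ≤ -Real.log (T-t)) :
    Vval T t r ≤ (2*(1+|Real.log T|)/(r-1)) * (-Real.log (T-t)) := by
  have hrr : 0 < r - 1 := by linarith
  obtain ⟨hW0, hW1⟩ := W_bounds T t r hT ht0 ht hr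
  have hnum : 2*(Real.log T - Real.log (T-t)) - 2*(1 - (T-t)^(r-1) * T^(1-r))/(r-1)
      ≤ 2*(1+|Real.log T|) * (-Real.log (T-t)) := by
    have h1 : Real.log T ≤ |Real.log T| := le_abs_self _
    have h2 : |Real.log T| ≤ |Real.log T| * (-Real.log (T-t)) :=
      le_mul_of_one_le_right (abs_nonneg _) hL1
    have h3 : 0 ≤ 2*(1 - (T-t)^(r-1) * T^(1-r))/(r-1) := by
      apply div_nonneg _ hrr.le
      linarith
    nlinarith [h1, h2, h3]
  unfold Vval
  rw [show (2*(1+|Real.log T|)/(r-1)) * (-Real.log (T-t))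
      = (2*(1+|Real.log T|) * (-Real.log (T-t)))/(r-1) by ring]
  exact (div_le_div_iff_of_pos_right hrr).mpr hnum

lemma scalar_id (β g M : ℝ) (hβ : β ≠ 0) (hg : g ≠ 0) :
    (1/(16*(g/β)^2)) * ((8/β^2) * ((2*M/β)*g) + (32/β^2) * ((2*M/(β/2))*g))
      = (9*(2*M)/(2*β))/g := by
  field_simp
  ring


theorem stmt_14 (T α : ℝ) (hT : 0 < T) (hα : 1 / 2 < α) :
    ∃ C > 0, ∃ t₀ : ℝ, max 0 (T - 1 / Real.exp 1) < t₀ ∧ t₀ < T ∧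
      ∀ t : ℝ, t₀ < t → t < T →
        (1 / (bfun T α t) ^ 2) *
            Real.sqrt (((bfun T α t) ^ 2 - 2 * normSq T (fker T α t)) ^ 2
              + 8 * normSq T (contr T (fker T α t) (fker T α t)))
          ≤ C / Real.sqrt |Real.log (T - t)| := by
  have hβ : 0 < 2*α - 1 := by linarith
  obtain ⟨c₁, hc₁⟩ : ∃ c : ℝ, c = |Real.log T| + 1/(2*α-1) := ⟨_, rfl⟩
  have hc₁0 : 0 < c₁ := by rw [hc₁]; positivity
  obtain ⟨kV, hkV⟩ : ∃ c : ℝ, c = 2*(1+|Real.log T|) := ⟨_, rfl⟩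
  have hkV0 : 0 < kV := by rw [hkV]; positivity
  obtain ⟨L₀, hL₀⟩ : ∃ c : ℝ, c = 2*c₁ + 1 := ⟨_, rfl⟩
  have hL₀1 : 1 ≤ L₀ := by rw [hL₀]; linarith
  obtain ⟨C₂, hC₂⟩ : ∃ c : ℝ, c = 9*kV/(2*(2*α-1)) := ⟨_, rfl⟩
  have hC₂0 : 0 < C₂ := by rw [hC₂]; positivity
  obtain ⟨C, hCdef⟩ : ∃ c : ℝ, c = 4*Real.sqrt (4*c₁^2 + 8*C₂) := ⟨_, rfl⟩
  have hC0 : 0 < C := by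
    rw [hCdef]
    have h1 : 0 < 4*c₁^2 + 8*C₂ := by positivity
    have h2 := Real.sqrt_pos.mpr h1
    linarith
  obtain ⟨t₀, ht₀def⟩ : ∃ c : ℝ, c = max (T - Real.exp (-L₀)) ((max 0 (T - 1/Real.exp 1) + T)/2) :=
    ⟨_, rfl⟩
  have hm : max 0 (T - 1/Real.exp 1) < T := by
    apply max_lt hT
    have := Real.exp_pos 1
    have : 0 < 1/Real.exp 1 := by positivity
    linarith
  have hm0 : 0 ≤ max 0 (T - 1/Real.exp 1) := le_max_left 0 _
  refine ⟨C, hC0, t₀, ?_, ?_, ?_⟩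
  · calc max 0 (T - 1/Real.exp 1) < (max 0 (T - 1/Real.exp 1) + T)/2 := by linarith
      _ ≤ t₀ := by rw [ht₀def]; exact le_max_right _ _
  · rw [ht₀def]
    apply max_lt
    · have := Real.exp_pos (-L₀); linarith
    · linarith
  intro t ht₁ ht₂
  have hmid : (max 0 (T - 1/Real.exp 1) + T)/2 ≤ t₀ := by
    rw [ht₀def]; exact le_max_right _ _
  have ht0 : 0 ≤ t := by linarith
  have hTt : 0 < T - t := by linarith
  have hexp : T - t < Real.exp (-L₀) := by
    have h5 : T - Real.exp (-L₀) ≤ t₀ := by rw [ht₀def]; exact le_max_left _ _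
    linarith
  have hlogt : Real.log (T-t) < -L₀ := by
    have h6 : Real.log (T-t) < Real.log (Real.exp (-L₀)) := Real.log_lt_log hTt hexp
    rwa [Real.log_exp] at h6
  have hL1 : 1 ≤ -Real.log (T-t) := by linarith
  have hLpos : 0 < -Real.log (T-t) := by linarith
  have hLne : -Real.log (T-t) ≠ 0 := ne_of_gt hLpos
  have hβne : (2*α-1) ≠ 0 := ne_of_gt hβ
  have habs : |Real.log (T-t)| = -Real.log (T-t) := abs_of_neg (by linarith)
  have hlam_eq : lam T α t = (-Real.log (T-t))/(2*α-1) := by unfold lam; rw [habs]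
  have hlam : 0 < lam T α t := by rw [hlam_eq]; positivity
  -- b value
  have hb_eq : bfun T α t = 1 +
      (Real.log T - (1 - (T-t)^(2*α-1)*T^(1-2*α))/(2*α-1))/(-Real.log (T-t)) := by
    unfold bfun
    rw [bfun_integral T α t hT ht0 ht₂ hα, hlam_eq]
    unfold Dval
    rw [one_div_div, div_mul_div_comm, mul_comm (-Real.log (T-t)) (2*α-1),
      mul_div_mul_left _ _ hβne]
    have expand : 1 + (Real.log T - (1 - (T-t)^(2*α-1)*T^(1-2*α))/(2*α-1))/(-Real.log (T-t))
        = ((-Real.log (T-t)) + (Real.log T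
            - (1 - (T-t)^(2*α-1)*T^(1-2*α))/(2*α-1)))/(-Real.log (T-t)) := by
      rw [add_div, div_self hLne]
    rw [expand]
    congr 1
    ring
  obtain ⟨hW0, hW1⟩ := W_bounds T t (2*α) hT ht0 ht₂ (by linarith)
  have hE : |Real.log T - (1 - (T-t)^(2*α-1)*T^(1-2*α))/(2*α-1)| ≤ c₁ := by
    have hd0 : 0 ≤ (1 - (T-t)^(2*α-1)*T^(1-2*α))/(2*α-1) := by
      apply div_nonneg _ hβ.le
      linarith
    have hd1 : (1 - (T-t)^(2*α-1)*T^(1-2*α))/(2*α-1) ≤ 1/(2*α-1) := by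
      apply (div_le_div_iff_of_pos_right hβ).mpr
      linarith
    rw [abs_le]
    constructor
    · have := neg_abs_le (Real.log T)
      rw [hc₁]; linarith
    · have := le_abs_self (Real.log T)
      rw [hc₁]; linarith
  have hb1 : |bfun T α t - 1| ≤ c₁/(-Real.log (T-t)) := by
    rw [hb_eq, add_sub_cancel_left, abs_div, abs_of_pos hLpos]
    exact (div_le_div_iff_of_pos_right hLpos).mpr hE
  have hhalf : c₁/(-Real.log (T-t)) ≤ 1/2 := by
    rw [div_le_iff₀ hLpos]
    rw [hL₀] at hlogt
    linarith
  have hbabs := abs_le.mp hb1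
  have hblo : 1/2 ≤ bfun T α t := by
    have := hbabs.1
    linarith
  have hbhi : bfun T α t ≤ 2 := by
    have := hbabs.2
    linarith
  -- F identity
  have h2F : 2 * normSq T (fker T α t) = bfun T α t := by
    rw [normSq_fker T α t hT ht0 ht₂ hα hlam, Vval_eq_two_Dval]
    unfold bfun
    rw [bfun_integral T α t hT ht0 ht₂ hα]
    have hln : lam T α t ≠ 0 := ne_of_gt hlam
    field_simp
    ring
  -- G bound
  have hV2 := Vval_le T t (2*α) hT ht0 ht₂ (by linarith) hL1
  have hV' := Vval_le T t (α+1/2) hT ht0 ht₂ (by linarith) hL1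
  have hG := G_bound T α t hT ht0 ht₂ hα hlam
  have hGfin : normSq T (contr T (fker T α t) (fker T α t)) ≤ C₂/(-Real.log (T-t)) := by
    calc normSq T (contr T (fker T α t) (fker T α t))
        ≤ (1/(16*(lam T α t)^2)) * ((8/(2*α-1)^2) * Vval T t (2*α)
            + (32/(2*α-1)^2) * Vval T t (α+1/2)) := hG
      _ ≤ (1/(16*(lam T α t)^2)) *
          ((8/(2*α-1)^2) * ((2*(1+|Real.log T|)/(2*α-1)) * (-Real.log (T-t)))
            + (32/(2*α-1)^2) * ((2*(1+|Real.log T|)/(α+1/2-1)) * (-Real.log (T-t)))) := by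
          apply mul_le_mul_of_nonneg_left _ (by positivity)
          exact add_le_add (mul_le_mul_of_nonneg_left hV2 (by positivity))
            (mul_le_mul_of_nonneg_left hV' (by positivity))
      _ = C₂/(-Real.log (T-t)) := by
          rw [hlam_eq, hC₂, hkV, show α+1/2-1 = (2*α-1)/2 by ring]
          exact scalar_id (2*α-1) (-Real.log (T-t)) (1+|Real.log T|) hβne hLne
  -- final
  have harg : ((bfun T α t)^2 - 2 * normSq T (fker T α t))^2
      + 8 * normSq T (contr T (fker T α t) (fker T α t))
      ≤ (4*c₁^2 + 8*C₂)/(-Real.log (T-t)) := by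
    rw [h2F]
    have h8 : (bfun T α t - 1)^2 ≤ (c₁/(-Real.log (T-t)))^2 := by
      rw [← sq_abs]
      exact pow_le_pow_left₀ (abs_nonneg _) hb1 2
    have h9 : (c₁/(-Real.log (T-t)))^2 ≤ c₁^2/(-Real.log (T-t)) := by
      rw [div_pow]
      have hL2 : -Real.log (T-t) ≤ (-Real.log (T-t))^2 := by
        rw [sq]
        exact le_mul_of_one_le_left hLpos.le hL1
      have hc2 : (0:ℝ) < c₁^2 := by positivity
      exact div_le_div_of_nonneg_left hc2.le hLpos hL2
    have hb4 : (bfun T α t)^2 ≤ 4 := by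
      have h12 : (bfun T α t)^2 ≤ 2^2 := pow_le_pow_left₀ (by linarith) hbhi 2
      norm_num at h12
      exact h12
    have h7 : ((bfun T α t)^2 - bfun T α t)^2 ≤ 4*(c₁^2/(-Real.log (T-t))) := by
      have e : ((bfun T α t)^2 - bfun T α t)^2 = (bfun T α t)^2*(bfun T α t - 1)^2 := by
        ring
      rw [e]
      have h10 : (bfun T α t - 1)^2 ≤ c₁^2/(-Real.log (T-t)) := h8.trans h9
      have h11 : 0 ≤ (bfun T α t - 1)^2 := sq_nonneg _
      exact mul_le_mul hb4 h10 h11 (by norm_num)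
    have hsum : (4*c₁^2 + 8*C₂)/(-Real.log (T-t))
        = 4*(c₁^2/(-Real.log (T-t))) + 8*(C₂/(-Real.log (T-t))) := by ring
    rw [hsum]
    linarith [hGfin, h7]
  rw [habs]
  have hsqle : Real.sqrt (((bfun T α t)^2 - 2 * normSq T (fker T α t))^2
      + 8 * normSq T (contr T (fker T α t) (fker T α t)))
      ≤ Real.sqrt ((4*c₁^2 + 8*C₂)/(-Real.log (T-t))) := Real.sqrt_le_sqrt harg
  have hbsq : (0:ℝ) < (bfun T α t)^2 := by positivity
  have h14 : 1/(bfun T α t)^2 ≤ 4 := by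
    rw [div_le_iff₀ hbsq]
    have h15 : ((1:ℝ)/2)^2 ≤ (bfun T α t)^2 := pow_le_pow_left₀ (by norm_num) hblo 2
    norm_num at h15
    linarith
  calc (1 / (bfun T α t) ^ 2) *
      Real.sqrt (((bfun T α t) ^ 2 - 2 * normSq T (fker T α t)) ^ 2
        + 8 * normSq T (contr T (fker T α t) (fker T α t)))
      ≤ 4 * Real.sqrt ((4*c₁^2 + 8*C₂)/(-Real.log (T-t))) :=
        mul_le_mul h14 hsqle (Real.sqrt_nonneg _) (by norm_num)
    _ = 4 * (Real.sqrt (4*c₁^2 + 8*C₂) / Real.sqrt (-Real.log (T-t))) := by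
        rw [Real.sqrt_div (by positivity)]
    _ = C / Real.sqrt (-Real.log (T-t)) := by
        rw [hCdef]; ring
end
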